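/- Suppose the set S = {(p₁,p₂,p₃) ∈ (L_R*)³ : p₁ = p₂ + p₃ and |p₁| ≠ |p₂| + |p₃|} is nonempty, let Λ_* = min_{(p₁,p₂,p₃)∈S} ||p₁| − |p₂| − |p₃||, and let 0 ≤ Λ < Λ_*. Let f : [0, ∞) → (0, ∞)^{L_R*} be a solution of the discrete near-resonance acoustic kinetic system with broadening Λ, with strictly positive values. Then there exists an equilibrium f* ∈ (0, ∞)^{L_R*} (i.e., Q^{NR}_p[f*] = 0 for all p ∈ L_R*) such that for every p ∈ L_R*, writing p = kP where P is the nonzero point of ℤ³ of minimal Euclidean norm on the ray {sp : s > 0} and k is a positive integer, one has f*_p = 1/(k·ρ(P)) for a constant ρ(P) > 0 depending only on P; moreover there exist constants C₁, C₂ > 0 such that max_{p∈L_R*} |f_p(t) − f*_p| ≤ C₁·e^{−C₂ t} for all t ≥ 0. -/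

import Mathlib

open scoped BigOperators Classical

/-- Euclidean norm of a point of the integer lattice `ℤ³`. -/
noncomputable def enorm3 (p : Fin 3 → ℤ) : ℝ := Real.sqrt (∑ i, ((p i : ℝ))^2)

/-- The truncated lattice `L_R* = {p ∈ ℤ³ : 0 < |p| < R}` (as a finite set). -/
noncomputable def latticeBall (R : ℝ) : Finset (Fin 3 → ℤ) :=
  (Finset.Icc (fun _ => (-⌈R⌉ : ℤ)) (fun _ => (⌈R⌉ : ℤ))).filter
    (fun p => 0 < enorm3 p ∧ enorm3 p < R)

/-- Right-hand side of the discrete exact-resonance acoustic wave kinetic system, with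
kernel `V_{p₁,p₂,p₃} = |p₁||p₂||p₃|` and phonon dispersion `ω(p) = |p|`. -/
noncomputable def Qres (R : ℝ) (f : (Fin 3 → ℤ) → ℝ) (p1 : Fin 3 → ℤ) : ℝ :=
  (∑ p2 ∈ latticeBall R, ∑ p3 ∈ latticeBall R,
      if p1 = p2 + p3 ∧ enorm3 p1 = enorm3 p2 + enorm3 p3 then
        enorm3 p1 * enorm3 p2 * enorm3 p3 *
          (f p2 * f p3 - f p1 * (f p2 + f p3)) else 0)
  - 2 * ∑ p2 ∈ latticeBall R, ∑ p3 ∈ latticeBall R,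
      if p3 = p1 + p2 ∧ enorm3 p3 = enorm3 p1 + enorm3 p2 then
        enorm3 p1 * enorm3 p2 * enorm3 p3 *
          (f p1 * f p2 - f p3 * (f p1 + f p2)) else 0

/-- Right-hand side of the discrete near-resonance acoustic wave kinetic system with
resonance broadening `Λ`. -/
noncomputable def QNR (R Λ : ℝ) (f : (Fin 3 → ℤ) → ℝ) (p1 : Fin 3 → ℤ) : ℝ :=
  (∑ p2 ∈ latticeBall R, ∑ p3 ∈ latticeBall R,
      if p1 = p2 + p3 ∧ |enorm3 p1 - enorm3 p2 - enorm3 p3| ≤ Λ then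
        enorm3 p1 * enorm3 p2 * enorm3 p3 *
          (f p2 * f p3 - f p1 * (f p2 + f p3)) else 0)
  - 2 * ∑ p2 ∈ latticeBall R, ∑ p3 ∈ latticeBall R,
      if p3 = p1 + p2 ∧ |enorm3 p3 - enorm3 p1 - enorm3 p2| ≤ Λ then
        enorm3 p1 * enorm3 p2 * enorm3 p3 *
          (f p1 * f p2 - f p3 * (f p1 + f p2)) else 0

/-- `Q` lies on the open ray `{s • p : s > 0}` through `p`. -/
def OnRay (p Q : Fin 3 → ℤ) : Prop :=
  ∃ s : ℝ, 0 < s ∧ ∀ i, (Q i : ℝ) = s * (p i : ℝ)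

-- Section 1 : norm basics
lemma enorm3_nonneg (p : Fin 3 → ℤ) : 0 ≤ enorm3 p := Real.sqrt_nonneg _

noncomputable def E3 (p : Fin 3 → ℤ) : EuclideanSpace ℝ (Fin 3) := WithLp.toLp 2 (fun i => (p i : ℝ))

lemma enorm3_eq_norm (p : Fin 3 → ℤ) : enorm3 p = ‖E3 p‖ := by
  rw [EuclideanSpace.norm_eq]
  unfold enorm3 E3
  congr 1
  refine Finset.sum_congr rfl fun i _ => ?_
  rw [Real.norm_eq_abs, sq_abs]

lemma E3_add (p q : Fin 3 → ℤ) : E3 (p + q) = E3 p + E3 q := by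
  ext i; simp [E3]

lemma E3_eq_zero {p : Fin 3 → ℤ} (h : E3 p = 0) : p = 0 := by
  funext i
  have := congrArg (fun v => v i) h
  simpa [E3] using this

lemma enorm3_pos {p : Fin 3 → ℤ} (h : p ≠ 0) : 0 < enorm3 p := by
  rw [enorm3_eq_norm]
  refine norm_pos_iff.mpr fun h0 => h (E3_eq_zero h0)

lemma enorm3_nsmul (m : ℕ) (p : Fin 3 → ℤ) : enorm3 ((m : ℤ) • p) = m * enorm3 p := by
  unfold enorm3
  have : ∀ i : Fin 3, ((((m:ℤ) • p) i : ℤ) : ℝ)^2 = (m:ℝ)^2 * ((p i : ℝ))^2 := by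
    intro i; simp [Pi.smul_apply]; push_cast; ring
  rw [Finset.sum_congr rfl (fun i _ => this i), ← Finset.mul_sum,
    Real.sqrt_mul (by positivity), Real.sqrt_sq (by positivity)]

lemma coord_le_enorm3 (p : Fin 3 → ℤ) (i : Fin 3) : |(p i : ℝ)| ≤ enorm3 p := by
  rw [← Real.sqrt_sq_eq_abs]
  apply Real.sqrt_le_sqrt
  exact Finset.single_le_sum (f := fun j => ((p j : ℝ))^2) (fun j _ => sq_nonneg _)
    (Finset.mem_univ i)

lemma mem_latticeBall {R : ℝ} {p : Fin 3 → ℤ} :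
    p ∈ latticeBall R ↔ 0 < enorm3 p ∧ enorm3 p < R := by
  unfold latticeBall
  rw [Finset.mem_filter]
  constructor
  · exact fun h => h.2
  · intro h
    refine ⟨Finset.mem_Icc.mpr ⟨?_, ?_⟩, h⟩ <;> (intro i)
    · have h1 : |(p i : ℝ)| ≤ R := (coord_le_enorm3 p i).trans h.2.le
      have h2 : ((-⌈R⌉ : ℤ) : ℝ) ≤ (p i : ℝ) := by
        push_cast
        have := Int.le_ceil R
        cases abs_le.mp h1 with | intro l r => linarith
      exact_mod_cast h2
    · have h1 : |(p i : ℝ)| ≤ R := (coord_le_enorm3 p i).trans h.2.le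
      have h2 : ((p i : ℝ)) ≤ ((⌈R⌉ : ℤ) : ℝ) := by
        push_cast
        have := Int.le_ceil R
        cases abs_le.mp h1 with | intro l r => linarith
      exact_mod_cast h2

lemma ne_zero_of_mem_latticeBall {R : ℝ} {p : Fin 3 → ℤ} (h : p ∈ latticeBall R) : p ≠ 0 := by
  intro h0
  have := (mem_latticeBall.mp h).1
  rw [h0] at this
  simp [enorm3] at this

-- Section 2 : gcd / primitive vectors
noncomputable def gcd3 (p : Fin 3 → ℤ) : ℤ := Finset.univ.gcd p

noncomputable def prim (p : Fin 3 → ℤ) : Fin 3 → ℤ := fun i => p i / gcd3 p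

lemma gcd3_dvd (p : Fin 3 → ℤ) (i : Fin 3) : gcd3 p ∣ p i :=
  Finset.gcd_dvd (Finset.mem_univ i)

lemma gcd3_nonneg (p : Fin 3 → ℤ) : 0 ≤ gcd3 p := by
  have h : normalize (gcd3 p) = gcd3 p := Finset.normalize_gcd
  rw [← h, ← Int.abs_eq_normalize]
  positivity

lemma gcd3_pos {p : Fin 3 → ℤ} (hp : p ≠ 0) : 0 < gcd3 p := by
  rcases (gcd3_nonneg p).lt_or_eq with h | h
  · exact h
  · exfalso
    apply hp
    funext i
    simpa using Finset.gcd_eq_zero_iff.mp h.symm i (Finset.mem_univ i)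

lemma prim_spec {p : Fin 3 → ℤ} (hp : p ≠ 0) (i : Fin 3) : p i = gcd3 p * prim p i :=
  (Int.mul_ediv_cancel' (gcd3_dvd p i)).symm

lemma gcd3_mul_left (c : ℤ) (p : Fin 3 → ℤ) :
    gcd3 (fun i => c * p i) = |c| * gcd3 p := by
  unfold gcd3
  rw [Finset.gcd_mul_left]
  congr 1
  exact (Int.abs_eq_normalize c).symm

lemma gcd3_prim {p : Fin 3 → ℤ} (hp : p ≠ 0) : gcd3 (prim p) = 1 := by
  have hg : 0 < gcd3 p := gcd3_pos hp
  have h1 : gcd3 p = |gcd3 p| * gcd3 (prim p) := by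
    conv_lhs => rw [show p = fun i => gcd3 p * prim p i from funext fun i => prim_spec hp i]
    exact gcd3_mul_left _ _
  rw [abs_of_pos hg] at h1
  nlinarith [gcd3_nonneg (prim p), h1]

lemma prim_ne_zero {p : Fin 3 → ℤ} (hp : p ≠ 0) : prim p ≠ 0 := by
  intro h0
  apply hp
  funext i
  have h := congrFun h0 i
  rw [prim_spec hp i]
  simp only [Pi.zero_apply] at h ⊢
  rw [h, mul_zero]

/-- An integer point on the open ray of `p` is a positive multiple of `prim p`. -/
lemma lattice_on_ray {p Q : Fin 3 → ℤ} (hp : p ≠ 0) {r : ℝ} (hr : 0 < r)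
    (hQ : ∀ i, (Q i : ℝ) = r * (p i : ℝ)) :
    ∃ m : ℕ, 0 < m ∧ Q = (m : ℤ) • prim p := by
  obtain ⟨i0, hi0⟩ : ∃ i, p i ≠ 0 := by
    by_contra h
    push_neg at h
    exact hp (funext h)
  set n : ℤ := ∑ i, p i * p i with hn
  have hnpos : 0 < n :=
    Finset.sum_pos' (fun i _ => mul_self_nonneg _)
      ⟨i0, Finset.mem_univ i0, mul_self_pos.mpr hi0⟩
  set c : ℤ := ∑ i, Q i * p i with hc
  have hcr : (c : ℝ) = r * (n : ℝ) := by
    rw [hc, hn]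
    push_cast
    rw [Finset.mul_sum]
    exact Finset.sum_congr rfl fun i _ => by rw [hQ i]; ring
  have hcpos : 0 < c := by
    have h : (0 : ℝ) < (c : ℝ) := by rw [hcr]; positivity
    exact_mod_cast h
  have key : ∀ i, n * Q i = c * p i := by
    intro i
    have h : ((n * Q i : ℤ) : ℝ) = ((c * p i : ℤ) : ℝ) := by
      push_cast
      rw [hQ i, hcr]; ring
    exact_mod_cast h
  have hg : 0 < gcd3 p := gcd3_pos hp
  have hdvd2 : n ∣ c * gcd3 p := by
    have h1 : n ∣ gcd3 (fun i => c * p i) := Finset.dvd_gcd fun i _ => ⟨Q i, (key i).symm⟩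
    rwa [gcd3_mul_left, abs_of_pos hcpos] at h1
  obtain ⟨m', hm'⟩ := hdvd2
  have hm'pos : 0 < m' := by nlinarith
  refine ⟨m'.toNat, by omega, funext fun i => ?_⟩
  have h2 : n * Q i = n * (m' * prim p i) := by
    rw [key i, prim_spec hp i, ← mul_assoc, hm']
    ring
  have h3 : Q i = m' * prim p i := mul_left_cancel₀ hnpos.ne' h2
  simp only [Pi.smul_apply, smul_eq_mul]
  rw [h3, Int.toNat_of_nonneg hm'pos.le]

-- Section 3 : resonant triples are collinear
lemma gcd3_nsmul {P : Fin 3 → ℤ} (m : ℕ) : gcd3 ((m : ℤ) • P) = m * gcd3 P := by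
  have h : (m : ℤ) • P = fun i => (m : ℤ) * P i := rfl
  rw [h, gcd3_mul_left]
  congr 1
  simp

lemma gcd3_nsmul_prim {P : Fin 3 → ℤ} (hP : gcd3 P = 1) (m : ℕ) :
    gcd3 ((m : ℤ) • P) = m := by rw [gcd3_nsmul, hP, mul_one]

lemma prim_nsmul {P : Fin 3 → ℤ} (hP : gcd3 P = 1) {m : ℕ} (hm : 0 < m) :
    prim ((m : ℤ) • P) = P := by
  funext i
  unfold prim
  rw [gcd3_nsmul_prim hP]
  have : ((m : ℤ) • P) i = (m : ℤ) * P i := rfl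
  rw [this, Int.mul_ediv_cancel_left]
  exact_mod_cast hm.ne'

lemma nsmul_prim_inj {P Q : Fin 3 → ℤ} (hP : gcd3 P = 1) (hQ : gcd3 Q = 1)
    {a b : ℕ} (ha : 0 < a) (hb : 0 < b) (h : (a : ℤ) • P = (b : ℤ) • Q) :
    a = b ∧ P = Q := by
  have h1 : a = b := by
    have := (gcd3_nsmul_prim hP a).symm.trans (by rw [h, gcd3_nsmul_prim hQ])
    exact_mod_cast this
  subst h1
  refine ⟨rfl, funext fun i => ?_⟩
  have h2 : (a : ℤ) * P i = (a : ℤ) * Q i := congrFun h i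
  exact mul_left_cancel₀ (by exact_mod_cast ha.ne') h2

lemma E3_ne_zero {p : Fin 3 → ℤ} (hp : p ≠ 0) : E3 p ≠ 0 :=
  fun h => hp (E3_eq_zero h)

lemma resonant_collinear {p2 p3 : Fin 3 → ℤ} (h2 : p2 ≠ 0) (h3 : p3 ≠ 0)
    (hres : enorm3 (p2 + p3) = enorm3 p2 + enorm3 p3) :
    ∃ (P : Fin 3 → ℤ) (a b : ℕ), gcd3 P = 1 ∧ P ≠ 0 ∧ 0 < a ∧ 0 < b ∧
      p2 = (a : ℤ) • P ∧ p3 = (b : ℤ) • P := by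
  have hnorm : ‖E3 p2 + E3 p3‖ = ‖E3 p2‖ + ‖E3 p3‖ := by
    rw [← E3_add, ← enorm3_eq_norm, ← enorm3_eq_norm, ← enorm3_eq_norm]
    exact hres
  have hray : SameRay ℝ (E3 p2) (E3 p3) := sameRay_iff_norm_add.mpr hnorm
  obtain ⟨r, hr, hrs⟩ := hray.exists_pos_left (E3_ne_zero h2) (E3_ne_zero h3)
  have hQ : ∀ i, (p3 i : ℝ) = r * (p2 i : ℝ) := by
    intro i
    have := congrArg (fun v => v i) hrs
    simpa [E3] using this.symm
  obtain ⟨b, hb, hbP⟩ := lattice_on_ray h2 hr hQ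
  refine ⟨prim p2, (gcd3 p2).toNat, b, gcd3_prim h2, prim_ne_zero h2, ?_, hb, ?_, hbP⟩
  · have := gcd3_pos h2; omega
  · funext i
    have h := prim_spec h2 i
    simp only [Pi.smul_apply, smul_eq_mul]
    rw [h, Int.toNat_of_nonneg (gcd3_nonneg p2)]

-- Section 4 : ray indexing inside the ball
noncomputable def Nray (R : ℝ) (P : Fin 3 → ℤ) : ℕ := ⌈R / enorm3 P⌉₊ - 1

lemma ceil_ge_two {R : ℝ} {P : Fin 3 → ℤ} (hP : P ∈ latticeBall R) :
    2 ≤ ⌈R / enorm3 P⌉₊ := by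
  obtain ⟨h1, h2⟩ := mem_latticeBall.mp hP
  have : (1 : ℝ) < R / enorm3 P := (one_lt_div h1).mpr h2
  have := Nat.lt_ceil.mpr (by exact_mod_cast this : ((1 : ℕ) : ℝ) < R / enorm3 P)
  omega

lemma Nray_pos {R : ℝ} {P : Fin 3 → ℤ} (hP : P ∈ latticeBall R) : 1 ≤ Nray R P := by
  have := ceil_ge_two hP
  unfold Nray
  omega

lemma smulP_mem_ball {R : ℝ} {P : Fin 3 → ℤ} (hP : P ∈ latticeBall R) (m : ℕ) :
    ((m : ℤ) • P ∈ latticeBall R) ↔ 1 ≤ m ∧ m ≤ Nray R P := by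
  obtain ⟨h1, h2⟩ := mem_latticeBall.mp hP
  rw [mem_latticeBall, enorm3_nsmul]
  have hc := ceil_ge_two hP
  constructor
  · rintro ⟨ha, hb⟩
    have hm : 1 ≤ m := by
      by_contra h
      push_neg at h
      interval_cases m <;> simp at ha
    refine ⟨hm, ?_⟩
    have : (m : ℝ) < R / enorm3 P := (lt_div_iff₀ h1).mpr hb
    have := Nat.lt_ceil.mpr this
    unfold Nray
    omega
  · rintro ⟨ha, hb⟩
    have hm : (m : ℝ) < R / enorm3 P := by
      apply Nat.lt_ceil.mp
      unfold Nray at hb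
      omega
    constructor
    · have : (0:ℝ) < m := by exact_mod_cast ha
      positivity
    · exact (lt_div_iff₀ h1).mp hm

noncomputable def rayF (R : ℝ) (P : Fin 3 → ℤ) : Finset (Fin 3 → ℤ) :=
  (Finset.Icc 1 (Nray R P)).image (fun m : ℕ => (m : ℤ) • P)

lemma rayF_subset {R : ℝ} {P : Fin 3 → ℤ} (hP : P ∈ latticeBall R) :
    rayF R P ⊆ latticeBall R := by
  intro q hq
  obtain ⟨m, hm, rfl⟩ := Finset.mem_image.mp hq
  rw [Finset.mem_Icc] at hm
  exact (smulP_mem_ball hP m).mpr hm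

lemma mem_rayF {R : ℝ} {P : Fin 3 → ℤ} (hP : P ∈ latticeBall R) (hprim : gcd3 P = 1)
    {q : Fin 3 → ℤ} :
    q ∈ rayF R P ↔ q ∈ latticeBall R ∧ prim q = P := by
  constructor
  · intro hq
    obtain ⟨m, hm, rfl⟩ := Finset.mem_image.mp hq
    rw [Finset.mem_Icc] at hm
    exact ⟨(smulP_mem_ball hP m).mpr hm, prim_nsmul hprim hm.1⟩
  · rintro ⟨hq, rfl⟩
    have hqne : q ≠ 0 := ne_zero_of_mem_latticeBall hq
    have hg := gcd3_pos hqne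
    have hdec : q = ((gcd3 q).toNat : ℤ) • prim q := by
      funext i
      simp only [Pi.smul_apply, smul_eq_mul]
      rw [Int.toNat_of_nonneg (gcd3_nonneg q)]
      exact prim_spec hqne i
    refine Finset.mem_image.mpr ⟨(gcd3 q).toNat, Finset.mem_Icc.mpr ?_, hdec.symm⟩
    have hmem : (((gcd3 q).toNat : ℤ) • prim q) ∈ latticeBall R := by rw [← hdec]; exact hq
    have hPball : prim q ∈ latticeBall R := by
      rw [mem_latticeBall]
      obtain ⟨hq1, hq2⟩ := mem_latticeBall.mp hq
      have h1 : 0 < enorm3 (prim q) := enorm3_pos (prim_ne_zero hqne)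
      refine ⟨h1, lt_of_le_of_lt ?_ hq2⟩
      conv_rhs => rw [hdec]
      rw [enorm3_nsmul]
      have : (1 : ℝ) ≤ ((gcd3 q).toNat : ℕ) := by
        have : 1 ≤ (gcd3 q).toNat := by omega
        exact_mod_cast this
      nlinarith
    exact (smulP_mem_ball hPball _).mp hmem

lemma sum_rayF {R : ℝ} {P : Fin 3 → ℤ} (hprim : gcd3 P = 1) (g : (Fin 3 → ℤ) → ℝ) :
    ∑ q ∈ rayF R P, g q = ∑ m ∈ Finset.Icc 1 (Nray R P), g ((m : ℤ) • P) := by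
  rw [rayF, Finset.sum_image]
  intro a ha b hb hab
  have h1 := gcd3_nsmul_prim hprim a
  rw [show ((a : ℤ) • P) = (b : ℤ) • P from hab, gcd3_nsmul_prim hprim b] at h1
  exact_mod_cast h1.symm

-- Section 5 : QNR = Qres below threshold, and the master summation identity
lemma near_iff_exact {R Λ Λstar : ℝ}
    (hmin : IsLeast {x : ℝ | ∃ p1 ∈ latticeBall R, ∃ p2 ∈ latticeBall R,
      ∃ p3 ∈ latticeBall R, p1 = p2 + p3 ∧ enorm3 p1 ≠ enorm3 p2 + enorm3 p3 ∧
        x = |enorm3 p1 - enorm3 p2 - enorm3 p3|} Λstar)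
    (hΛ0 : 0 ≤ Λ) (hΛ : Λ < Λstar)
    {q1 q2 q3 : Fin 3 → ℤ} (h1 : q1 ∈ latticeBall R) (h2 : q2 ∈ latticeBall R)
    (h3 : q3 ∈ latticeBall R) :
    (q1 = q2 + q3 ∧ |enorm3 q1 - enorm3 q2 - enorm3 q3| ≤ Λ) ↔
      (q1 = q2 + q3 ∧ enorm3 q1 = enorm3 q2 + enorm3 q3) := by
  constructor
  · rintro ⟨hsum, hnear⟩
    refine ⟨hsum, ?_⟩
    by_contra hne
    have hmem : |enorm3 q1 - enorm3 q2 - enorm3 q3| ∈ {x : ℝ | ∃ p1 ∈ latticeBall R,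
        ∃ p2 ∈ latticeBall R, ∃ p3 ∈ latticeBall R, p1 = p2 + p3 ∧
        enorm3 p1 ≠ enorm3 p2 + enorm3 p3 ∧ x = |enorm3 p1 - enorm3 p2 - enorm3 p3|} :=
      ⟨q1, h1, q2, h2, q3, h3, hsum, hne, rfl⟩
    have := hmin.2 hmem
    linarith
  · rintro ⟨hsum, hres⟩
    refine ⟨hsum, ?_⟩
    rw [hres]
    simp [hΛ0]

lemma QNR_eq_Qres {R Λ Λstar : ℝ}
    (hmin : IsLeast {x : ℝ | ∃ p1 ∈ latticeBall R, ∃ p2 ∈ latticeBall R,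
      ∃ p3 ∈ latticeBall R, p1 = p2 + p3 ∧ enorm3 p1 ≠ enorm3 p2 + enorm3 p3 ∧
        x = |enorm3 p1 - enorm3 p2 - enorm3 p3|} Λstar)
    (hΛ0 : 0 ≤ Λ) (hΛ : Λ < Λstar) (g : (Fin 3 → ℤ) → ℝ)
    {p1 : Fin 3 → ℤ} (hp1 : p1 ∈ latticeBall R) :
    QNR R Λ g p1 = Qres R g p1 := by
  unfold QNR Qres
  congr 1
  · refine Finset.sum_congr rfl fun p2 h2 => Finset.sum_congr rfl fun p3 h3 => ?_
    rw [if_congr (near_iff_exact hmin hΛ0 hΛ hp1 h2 h3) rfl rfl]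
  · congr 1
    refine Finset.sum_congr rfl fun p2 h2 => Finset.sum_congr rfl fun p3 h3 => ?_
    rw [if_congr (near_iff_exact hmin hΛ0 hΛ h3 hp1 h2) rfl rfl]

lemma sum3_cyc {α : Type*} (s : Finset α) (F : α → α → α → ℝ) :
    ∑ x ∈ s, ∑ y ∈ s, ∑ z ∈ s, F x y z = ∑ x ∈ s, ∑ y ∈ s, ∑ z ∈ s, F y z x := by
  have h1 : ∀ x, ∑ y ∈ s, ∑ z ∈ s, F x y z = ∑ z ∈ s, ∑ y ∈ s, F x y z :=
    fun x => Finset.sum_comm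
  rw [Finset.sum_congr rfl fun x _ => h1 x]
  exact Finset.sum_comm

lemma master (R : ℝ) (g ψ : (Fin 3 → ℤ) → ℝ) :
    ∑ p1 ∈ latticeBall R, ψ p1 * Qres R g p1 =
    ∑ p1 ∈ latticeBall R, ∑ p2 ∈ latticeBall R, ∑ p3 ∈ latticeBall R,
      if p1 = p2 + p3 ∧ enorm3 p1 = enorm3 p2 + enorm3 p3 then
        enorm3 p1 * enorm3 p2 * enorm3 p3 * (g p2 * g p3 - g p1 * (g p2 + g p3)) *
          (ψ p1 - ψ p2 - ψ p3) else 0 := by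
  classical
  set B := latticeBall R with hB
  -- the cyclically-permuted loss term
  have hcyc : (∑ x ∈ B, ∑ y ∈ B, ∑ z ∈ B,
        if z = x + y ∧ enorm3 z = enorm3 x + enorm3 y then
          enorm3 x * enorm3 y * enorm3 z * (g x * g y - g z * (g x + g y)) * ψ x else 0)
      = ∑ p1 ∈ B, ∑ p2 ∈ B, ∑ p3 ∈ B,
        if p1 = p2 + p3 ∧ enorm3 p1 = enorm3 p2 + enorm3 p3 then
          enorm3 p1 * enorm3 p2 * enorm3 p3 * (g p2 * g p3 - g p1 * (g p2 + g p3)) * ψ p2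
        else 0 := by
    rw [sum3_cyc]
    refine Finset.sum_congr rfl fun p1 _ => Finset.sum_congr rfl fun p2 _ =>
      Finset.sum_congr rfl fun p3 _ => ?_
    split_ifs with h
    · ring
    · rfl
  have hswap : (∑ p1 ∈ B, ∑ p2 ∈ B, ∑ p3 ∈ B,
        if p1 = p2 + p3 ∧ enorm3 p1 = enorm3 p2 + enorm3 p3 then
          enorm3 p1 * enorm3 p2 * enorm3 p3 * (g p2 * g p3 - g p1 * (g p2 + g p3)) * ψ p2
        else 0)
      = ∑ p1 ∈ B, ∑ p2 ∈ B, ∑ p3 ∈ B,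
        if p1 = p2 + p3 ∧ enorm3 p1 = enorm3 p2 + enorm3 p3 then
          enorm3 p1 * enorm3 p2 * enorm3 p3 * (g p2 * g p3 - g p1 * (g p2 + g p3)) * ψ p3
        else 0 := by
    refine Finset.sum_congr rfl fun p1 _ => ?_
    rw [Finset.sum_comm]
    refine Finset.sum_congr rfl fun p2 _ => Finset.sum_congr rfl fun p3 _ => ?_
    have hiff : (p1 = p3 + p2 ∧ enorm3 p1 = enorm3 p3 + enorm3 p2) ↔
        (p1 = p2 + p3 ∧ enorm3 p1 = enorm3 p2 + enorm3 p3) := by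
      constructor <;> rintro ⟨ha, hb⟩ <;> exact ⟨by rw [ha, add_comm], by rw [hb, add_comm]⟩
    rw [if_congr hiff rfl rfl]
    split_ifs with h
    · ring
    · rfl
  -- expand Qres
  have hexp : ∀ p1 ∈ B, ψ p1 * Qres R g p1 =
      (∑ p2 ∈ B, ∑ p3 ∈ B,
        if p1 = p2 + p3 ∧ enorm3 p1 = enorm3 p2 + enorm3 p3 then
          enorm3 p1 * enorm3 p2 * enorm3 p3 * (g p2 * g p3 - g p1 * (g p2 + g p3)) * ψ p1
        else 0)
      - 2 * ∑ p2 ∈ B, ∑ p3 ∈ B,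
        if p3 = p1 + p2 ∧ enorm3 p3 = enorm3 p1 + enorm3 p2 then
          enorm3 p1 * enorm3 p2 * enorm3 p3 * (g p1 * g p2 - g p3 * (g p1 + g p2)) * ψ p1
        else 0 := by
    intro p1 _
    unfold Qres
    rw [mul_sub]
    congr 1
    · rw [Finset.mul_sum]
      refine Finset.sum_congr rfl fun p2 _ => ?_
      rw [Finset.mul_sum]
      refine Finset.sum_congr rfl fun p3 _ => ?_
      split_ifs with h
      · ring
      · ring
    · rw [mul_left_comm]
      congr 1
      rw [Finset.mul_sum]
      refine Finset.sum_congr rfl fun p2 _ => ?_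
      rw [Finset.mul_sum]
      refine Finset.sum_congr rfl fun p3 _ => ?_
      split_ifs with h
      · ring
      · ring
  rw [Finset.sum_congr rfl hexp, Finset.sum_sub_distrib, ← Finset.mul_sum]
  -- identify the loss part with the cyclic permutation
  have hloss : (∑ p1 ∈ B, ∑ p2 ∈ B, ∑ p3 ∈ B,
        if p3 = p1 + p2 ∧ enorm3 p3 = enorm3 p1 + enorm3 p2 then
          enorm3 p1 * enorm3 p2 * enorm3 p3 * (g p1 * g p2 - g p3 * (g p1 + g p2)) * ψ p1
        else 0)
      = ∑ x ∈ B, ∑ y ∈ B, ∑ z ∈ B,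
        if z = x + y ∧ enorm3 z = enorm3 x + enorm3 y then
          enorm3 x * enorm3 y * enorm3 z * (g x * g y - g z * (g x + g y)) * ψ x else 0 := by
    refine Finset.sum_congr rfl fun p1 _ => Finset.sum_congr rfl fun p2 _ =>
      Finset.sum_congr rfl fun p3 _ => ?_
    split_ifs with h
    · ring
    · rfl
  rw [hloss, hcyc]
  have htwo : (2 : ℝ) * (∑ p1 ∈ B, ∑ p2 ∈ B, ∑ p3 ∈ B,
        if p1 = p2 + p3 ∧ enorm3 p1 = enorm3 p2 + enorm3 p3 then
          enorm3 p1 * enorm3 p2 * enorm3 p3 * (g p2 * g p3 - g p1 * (g p2 + g p3)) * ψ p2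
        else 0)
      = (∑ p1 ∈ B, ∑ p2 ∈ B, ∑ p3 ∈ B,
        if p1 = p2 + p3 ∧ enorm3 p1 = enorm3 p2 + enorm3 p3 then
          enorm3 p1 * enorm3 p2 * enorm3 p3 * (g p2 * g p3 - g p1 * (g p2 + g p3)) * ψ p2
        else 0)
      + (∑ p1 ∈ B, ∑ p2 ∈ B, ∑ p3 ∈ B,
        if p1 = p2 + p3 ∧ enorm3 p1 = enorm3 p2 + enorm3 p3 then
          enorm3 p1 * enorm3 p2 * enorm3 p3 * (g p2 * g p3 - g p1 * (g p2 + g p3)) * ψ p3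
        else 0) := by
    rw [← hswap]; ring
  rw [htwo, ← sub_sub]
  rw [← Finset.sum_sub_distrib, ← Finset.sum_sub_distrib]
  refine Finset.sum_congr rfl fun p1 _ => ?_
  rw [← Finset.sum_sub_distrib, ← Finset.sum_sub_distrib]
  refine Finset.sum_congr rfl fun p2 _ => ?_
  rw [← Finset.sum_sub_distrib, ← Finset.sum_sub_distrib]
  refine Finset.sum_congr rfl fun p3 _ => ?_
  split_ifs with h
  · ring
  · ring

-- Section 6 : structure of resonant triples; energy & entropy sums
lemma triple_decomp {R : ℝ} {p1 p2 p3 : Fin 3 → ℤ}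
    (h2 : p2 ∈ latticeBall R) (h3 : p3 ∈ latticeBall R)
    (hc : p1 = p2 + p3 ∧ enorm3 p1 = enorm3 p2 + enorm3 p3) :
    ∃ (P : Fin 3 → ℤ) (a b : ℕ), gcd3 P = 1 ∧ P ≠ 0 ∧ 0 < a ∧ 0 < b ∧
      p2 = (a : ℤ) • P ∧ p3 = (b : ℤ) • P ∧ p1 = ((a + b : ℕ) : ℤ) • P := by
  obtain ⟨P, a, b, hP1, hP0, ha, hb, hp2, hp3⟩ :=
    resonant_collinear (ne_zero_of_mem_latticeBall h2) (ne_zero_of_mem_latticeBall h3)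
      (by rw [← hc.1]; exact hc.2)
  refine ⟨P, a, b, hP1, hP0, ha, hb, hp2, hp3, ?_⟩
  rw [hc.1, hp2, hp3, ← add_smul]
  norm_cast

lemma mem_rayF_nsmul {R : ℝ} {P : Fin 3 → ℤ} (hP : P ∈ latticeBall R) (hprim : gcd3 P = 1)
    {Q : Fin 3 → ℤ} (hQprim : gcd3 Q = 1) (hQ0 : Q ≠ 0) {m : ℕ} (hm : 0 < m)
    (hmem : ((m : ℤ) • Q) ∈ latticeBall R) :
    ((m : ℤ) • Q ∈ rayF R P) ↔ Q = P := by
  rw [mem_rayF hP hprim]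
  constructor
  · rintro ⟨-, h⟩
    rw [prim_nsmul hQprim hm] at h
    exact h
  · rintro rfl
    exact ⟨hmem, prim_nsmul hQprim hm⟩

/-- the energy weight on the ray of `P` is conserved summand-by-summand -/
lemma energy_sum_zero {R : ℝ} {P : Fin 3 → ℤ} (hP : P ∈ latticeBall R)
    (hprim : gcd3 P = 1) (g : (Fin 3 → ℤ) → ℝ) :
    ∑ p1 ∈ latticeBall R, (if p1 ∈ rayF R P then (gcd3 p1 : ℝ) else 0) * Qres R g p1 = 0 := by
  rw [master]
  refine Finset.sum_eq_zero fun p1 h1 => Finset.sum_eq_zero fun p2 h2 =>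
    Finset.sum_eq_zero fun p3 h3 => ?_
  by_cases h : p1 = p2 + p3 ∧ enorm3 p1 = enorm3 p2 + enorm3 p3
  case neg => rw [if_neg h]
  rw [if_pos h]
  obtain ⟨Q, a, b, hQ1, hQ0, ha, hb, e2, e3, e1⟩ := triple_decomp h2 h3 h
  by_cases hQP : Q = P
  · rw [hQP] at e1 e2 e3 hQ1 hQ0
    have m1 : p1 ∈ rayF R P := by
      rw [e1, mem_rayF_nsmul hP hprim hQ1 hQ0 (by omega) (by rw [← e1]; exact h1)]
    have m2 : p2 ∈ rayF R P := by
      rw [e2, mem_rayF_nsmul hP hprim hQ1 hQ0 ha (by rw [← e2]; exact h2)]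
    have m3 : p3 ∈ rayF R P := by
      rw [e3, mem_rayF_nsmul hP hprim hQ1 hQ0 hb (by rw [← e3]; exact h3)]
    rw [if_pos m1, if_pos m2, if_pos m3]
    have g1 : gcd3 p1 = ((a + b : ℕ) : ℤ) := by rw [e1]; exact gcd3_nsmul_prim hQ1 _
    have g2 : gcd3 p2 = (a : ℤ) := by rw [e2]; exact gcd3_nsmul_prim hQ1 _
    have g3 : gcd3 p3 = (b : ℤ) := by rw [e3]; exact gcd3_nsmul_prim hQ1 _
    rw [g1, g2, g3]
    push_cast
    ring
  · have m1 : p1 ∉ rayF R P := by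
      rw [e1, mem_rayF_nsmul hP hprim hQ1 hQ0 (by omega) (by rw [← e1]; exact h1)]
      exact hQP
    have m2 : p2 ∉ rayF R P := by
      rw [e2, mem_rayF_nsmul hP hprim hQ1 hQ0 ha (by rw [← e2]; exact h2)]
      exact hQP
    have m3 : p3 ∉ rayF R P := by
      rw [e3, mem_rayF_nsmul hP hprim hQ1 hQ0 hb (by rw [← e3]; exact h3)]
      exact hQP
    rw [if_neg m1, if_neg m2, if_neg m3]
    ring

-- Section 7 : entropy dissipation
noncomputable def uRay (g : (Fin 3 → ℤ) → ℝ) (P : Fin 3 → ℤ) (m : ℕ) : ℝ := g ((m : ℤ) • P)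

lemma entropy_term_nonpos {R : ℝ} {P : Fin 3 → ℤ} (hP : P ∈ latticeBall R)
    (hprim : gcd3 P = 1) (g : (Fin 3 → ℤ) → ℝ) (hgpos : ∀ q ∈ latticeBall R, 0 < g q)
    {p1 p2 p3 : Fin 3 → ℤ} (h1 : p1 ∈ latticeBall R) (h2 : p2 ∈ latticeBall R)
    (h3 : p3 ∈ latticeBall R) :
    (if p1 = p2 + p3 ∧ enorm3 p1 = enorm3 p2 + enorm3 p3 then
        enorm3 p1 * enorm3 p2 * enorm3 p3 * (g p2 * g p3 - g p1 * (g p2 + g p3)) *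
          ((if p1 ∈ rayF R P then -(1 / g p1) else 0) -
           (if p2 ∈ rayF R P then -(1 / g p2) else 0) -
           (if p3 ∈ rayF R P then -(1 / g p3) else 0)) else 0) ≤ 0 := by
  by_cases h : p1 = p2 + p3 ∧ enorm3 p1 = enorm3 p2 + enorm3 p3
  case neg => rw [if_neg h]
  rw [if_pos h]
  obtain ⟨Q, a, b, hQ1, hQ0, ha, hb, e2, e3, e1⟩ := triple_decomp h2 h3 h
  by_cases hQP : Q = P
  · rw [hQP] at e1 e2 e3 hQ1 hQ0
    have m1 : p1 ∈ rayF R P := by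
      rw [e1, mem_rayF_nsmul hP hprim hQ1 hQ0 (by omega) (by rw [← e1]; exact h1)]
    have m2 : p2 ∈ rayF R P := by
      rw [e2, mem_rayF_nsmul hP hprim hQ1 hQ0 ha (by rw [← e2]; exact h2)]
    have m3 : p3 ∈ rayF R P := by
      rw [e3, mem_rayF_nsmul hP hprim hQ1 hQ0 hb (by rw [← e3]; exact h3)]
    rw [if_pos m1, if_pos m2, if_pos m3]
    have hg1 := hgpos p1 h1
    have hg2 := hgpos p2 h2
    have hg3 := hgpos p3 h3
    have key : g p2 * g p3 - g p1 * (g p2 + g p3) =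
        g p1 * g p2 * g p3 * (1 / g p1 - 1 / g p2 - 1 / g p3) := by
      field_simp
      ring
    rw [key]
    have heq : enorm3 p1 * enorm3 p2 * enorm3 p3 *
          (g p1 * g p2 * g p3 * (1 / g p1 - 1 / g p2 - 1 / g p3)) *
          (-(1 / g p1) - -(1 / g p2) - -(1 / g p3)) =
        -(enorm3 p1 * enorm3 p2 * enorm3 p3 * (g p1 * g p2 * g p3) *
          (1 / g p1 - 1 / g p2 - 1 / g p3) ^ 2) := by ring
    rw [heq, neg_nonpos]
    have e1p := enorm3_pos (ne_zero_of_mem_latticeBall h1)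
    have e2p := enorm3_pos (ne_zero_of_mem_latticeBall h2)
    have e3p := enorm3_pos (ne_zero_of_mem_latticeBall h3)
    positivity
  · have m1 : p1 ∉ rayF R P := by
      rw [e1, mem_rayF_nsmul hP hprim hQ1 hQ0 (by omega) (by rw [← e1]; exact h1)]
      exact hQP
    have m2 : p2 ∉ rayF R P := by
      rw [e2, mem_rayF_nsmul hP hprim hQ1 hQ0 ha (by rw [← e2]; exact h2)]
      exact hQP
    have m3 : p3 ∉ rayF R P := by
      rw [e3, mem_rayF_nsmul hP hprim hQ1 hQ0 hb (by rw [← e3]; exact h3)]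
      exact hQP
    rw [if_neg m1, if_neg m2, if_neg m3]
    simp

lemma entropy_dissip {R : ℝ} {P : Fin 3 → ℤ} (hP : P ∈ latticeBall R)
    (hprim : gcd3 P = 1) (g : (Fin 3 → ℤ) → ℝ) (hgpos : ∀ q ∈ latticeBall R, 0 < g q) :
    ∑ p1 ∈ latticeBall R, (if p1 ∈ rayF R P then -(1 / g p1) else 0) * Qres R g p1 ≤
    ∑ j ∈ Finset.Icc 1 (Nray R P - 1),
      -(((j + 1 : ℕ) : ℝ) * ((j : ℕ) : ℝ) * enorm3 P ^ 3 *
        (uRay g P (j + 1) * uRay g P j * uRay g P 1) *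
        (1 / uRay g P (j + 1) - 1 / uRay g P j - 1 / uRay g P 1) ^ 2) := by
  have hm := master R g (fun q => if q ∈ rayF R P then -(1 / g q) else 0)
  rw [hm]
  set B := latticeBall R with hB
  -- convert to a sum over the triple product
  have hprod : (∑ p1 ∈ B, ∑ p2 ∈ B, ∑ p3 ∈ B,
      if p1 = p2 + p3 ∧ enorm3 p1 = enorm3 p2 + enorm3 p3 then
        enorm3 p1 * enorm3 p2 * enorm3 p3 * (g p2 * g p3 - g p1 * (g p2 + g p3)) *
          ((if p1 ∈ rayF R P then -(1 / g p1) else 0) -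
           (if p2 ∈ rayF R P then -(1 / g p2) else 0) -
           (if p3 ∈ rayF R P then -(1 / g p3) else 0)) else 0)
      = ∑ x ∈ B ×ˢ B ×ˢ B,
        (fun p1 p2 p3 =>
          if p1 = p2 + p3 ∧ enorm3 p1 = enorm3 p2 + enorm3 p3 then
            enorm3 p1 * enorm3 p2 * enorm3 p3 * (g p2 * g p3 - g p1 * (g p2 + g p3)) *
              ((if p1 ∈ rayF R P then -(1 / g p1) else 0) -
               (if p2 ∈ rayF R P then -(1 / g p2) else 0) -
               (if p3 ∈ rayF R P then -(1 / g p3) else 0)) else 0) x.1 x.2.1 x.2.2 := by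
    rw [Finset.sum_product]
    refine Finset.sum_congr rfl fun p1 _ => ?_
    rw [Finset.sum_product]
  rw [hprod]
  have hNpos := Nray_pos hP
  set N := Nray R P with hN
  set τ : ℕ → (Fin 3 → ℤ) × ((Fin 3 → ℤ) × (Fin 3 → ℤ)) :=
    fun j => (((j + 1 : ℕ) : ℤ) • P, (((j : ℕ) : ℤ) • P, ((1 : ℕ) : ℤ) • P)) with hτ
  have hsub : (Finset.Icc 1 (N - 1)).image τ ⊆ B ×ˢ B ×ˢ B := by
    intro x hx
    obtain ⟨j, hj, rfl⟩ := Finset.mem_image.mp hx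
    rw [Finset.mem_Icc] at hj
    refine Finset.mem_product.mpr ⟨?_, Finset.mem_product.mpr ⟨?_, ?_⟩⟩
    · exact (smulP_mem_ball hP (j + 1)).mpr ⟨by omega, by omega⟩
    · exact (smulP_mem_ball hP j).mpr ⟨by omega, by omega⟩
    · exact (smulP_mem_ball hP 1).mpr ⟨le_refl 1, hNpos⟩
  have hle : ∀ x ∈ B ×ˢ B ×ˢ B,
      (fun p1 p2 p3 =>
          if p1 = p2 + p3 ∧ enorm3 p1 = enorm3 p2 + enorm3 p3 then
            enorm3 p1 * enorm3 p2 * enorm3 p3 * (g p2 * g p3 - g p1 * (g p2 + g p3)) *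
              ((if p1 ∈ rayF R P then -(1 / g p1) else 0) -
               (if p2 ∈ rayF R P then -(1 / g p2) else 0) -
               (if p3 ∈ rayF R P then -(1 / g p3) else 0)) else 0) x.1 x.2.1 x.2.2 ≤ 0 := by
    intro x hx
    rw [Finset.mem_product] at hx
    obtain ⟨hx1, hx23⟩ := hx
    rw [Finset.mem_product] at hx23
    exact entropy_term_nonpos hP hprim g hgpos hx1 hx23.1 hx23.2
  have hstep : ∀ (F : (Fin 3 → ℤ) × ((Fin 3 → ℤ) × (Fin 3 → ℤ)) → ℝ),
      (∀ x ∈ B ×ˢ B ×ˢ B, F x ≤ 0) → ((Finset.Icc 1 (N - 1)).image τ ⊆ B ×ˢ B ×ˢ B) →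
      ∑ x ∈ B ×ˢ B ×ˢ B, F x ≤ ∑ x ∈ (Finset.Icc 1 (N - 1)).image τ, F x := by
    intro F hF hs
    have := Finset.sum_le_sum_of_subset_of_nonneg hs
      (fun x hxB hxT => neg_nonneg.mpr (hF x hxB)) (f := fun x => -F x)
    simp only [Finset.sum_neg_distrib, neg_le_neg_iff] at this
    exact this
  refine le_trans (hstep _ hle hsub) ?_
  rw [Finset.sum_image ?hinj]
  case hinj =>
    intro a ha b hb hab
    have : (((a + 1 : ℕ) : ℤ) • P) = (((b + 1 : ℕ) : ℤ) • P) := congrArg Prod.fst hab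
    have h1 := gcd3_nsmul_prim hprim (a + 1)
    rw [this, gcd3_nsmul_prim hprim (b + 1)] at h1
    omega
  refine Finset.sum_le_sum fun j hj => ?_
  rw [Finset.mem_Icc] at hj
  -- evaluate the term at τ j
  have hcond : (((j + 1 : ℕ) : ℤ) • P) = (((j : ℕ) : ℤ) • P) + (((1 : ℕ) : ℤ) • P) := by
    rw [← add_smul]
    norm_cast
  have hres : enorm3 (((j + 1 : ℕ) : ℤ) • P) =
      enorm3 (((j : ℕ) : ℤ) • P) + enorm3 (((1 : ℕ) : ℤ) • P) := by
    rw [enorm3_nsmul, enorm3_nsmul, enorm3_nsmul]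
    push_cast
    ring
  have m1 : (((j + 1 : ℕ) : ℤ) • P) ∈ rayF R P :=
    Finset.mem_image.mpr ⟨j + 1, Finset.mem_Icc.mpr (by omega), rfl⟩
  have m2 : (((j : ℕ) : ℤ) • P) ∈ rayF R P :=
    Finset.mem_image.mpr ⟨j, Finset.mem_Icc.mpr (by omega), rfl⟩
  have m3 : (((1 : ℕ) : ℤ) • P) ∈ rayF R P :=
    Finset.mem_image.mpr ⟨1, Finset.mem_Icc.mpr (by omega), rfl⟩
  have hg1 : 0 < uRay g P (j + 1) := hgpos _ ((smulP_mem_ball hP (j + 1)).mpr (by omega))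
  have hg2 : 0 < uRay g P j := hgpos _ ((smulP_mem_ball hP j).mpr (by omega))
  have hg3 : 0 < uRay g P 1 := hgpos _ ((smulP_mem_ball hP 1).mpr ⟨le_refl 1, hNpos⟩)
  simp only [hτ]
  rw [if_pos ⟨hcond, hres⟩, if_pos m1, if_pos m2, if_pos m3]
  rw [enorm3_nsmul, enorm3_nsmul, enorm3_nsmul]
  have key : uRay g P j * uRay g P 1 - uRay g P (j + 1) * (uRay g P j + uRay g P 1) =
      uRay g P (j + 1) * uRay g P j * uRay g P 1 *
        (1 / uRay g P (j + 1) - 1 / uRay g P j - 1 / uRay g P 1) := by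
    field_simp
    ring
  show ((j + 1 : ℕ) : ℝ) * enorm3 P * (((j : ℕ) : ℝ) * enorm3 P) * (((1 : ℕ) : ℝ) * enorm3 P) *
      (uRay g P j * uRay g P 1 - uRay g P (j + 1) * (uRay g P j + uRay g P 1)) *
      (-(1 / uRay g P (j + 1)) - -(1 / uRay g P j) - -(1 / uRay g P 1)) ≤ _
  rw [key]
  push_cast
  ring_nf
  nlinarith [sq_nonneg (1 / uRay g P (j + 1) - 1 / uRay g P j - 1 / uRay g P 1),
    mul_pos (mul_pos hg1 hg2) hg3, enorm3_pos (ne_zero_of_mem_latticeBall hP),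
    sq_nonneg (enorm3 P)]

-- Section 8 : scalar logarithmic inequalities
lemma log_ineq_upper {y : ℝ} (hy : 0 < y) :
    Real.log y - (1 - 1 / y) ≤ (y - 1) ^ 2 / y := by
  have h1 : Real.log y ≤ y - 1 := Real.log_le_sub_one_of_pos hy
  have h2 : (y - 1) - (1 - 1 / y) = (y - 1) ^ 2 / y := by field_simp
  linarith

lemma log_ineq_lower {y : ℝ} (hy : 0 < y) :
    (y - 1) ^ 2 / (2 * y * (1 + y)) ≤ Real.log y - (1 - 1 / y) := by
  set s := Real.sqrt y with hsdef
  have hspos : 0 < s := Real.sqrt_pos.mpr hy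
  have hs : s ^ 2 = y := Real.sq_sqrt hy.le
  have hlog : Real.log y = 2 * Real.log s := by
    rw [← hs, Real.log_pow]
    push_cast
    ring
  have hls : 1 - 1 / s ≤ Real.log s := by
    have h := Real.log_le_sub_one_of_pos (show (0 : ℝ) < s⁻¹ by positivity)
    rw [Real.log_inv] at h
    have : 1 / s = s⁻¹ := one_div s
    linarith [h, this.ge]
  have hkey : (y - 1) ^ 2 / (2 * y * (1 + y)) ≤ (s - 1) ^ 2 / s ^ 2 := by
    rw [← hs, div_le_div_iff₀ (by positivity) (by positivity)]
    nlinarith [sq_nonneg (s * (s - 1) ^ 2), hspos, sq_nonneg s, sq_nonneg (s - 1)]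
  have hid : 2 * (1 - 1 / s) - (1 - 1 / s ^ 2) = (s - 1) ^ 2 / s ^ 2 := by
    field_simp
    ring
  have hfin : (s - 1) ^ 2 / s ^ 2 ≤ Real.log y - (1 - 1 / y) := by
    rw [hlog, ← hs]
    linarith [hls, hid]
  linarith

-- Section 9 : static functional inequalities on a ray
lemma telescope_w (N : ℕ) (u : ℕ → ℝ) :
    ∀ m : ℕ, 1 ≤ m → m ≤ N →
      1 / u m - (m : ℝ) * (1 / u 1) =
        ∑ j ∈ Finset.Icc 1 (m - 1), (1 / u (j + 1) - 1 / u j - 1 / u 1) := by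
  intro m hm
  induction m, hm using Nat.le_induction with
  | base =>
    intro _
    simp
  | succ n hn ih =>
    intro hle
    have h1 : n + 1 - 1 = n := rfl
    rw [h1]
    have h2 : n - 1 + 1 = n := by omega
    have h3 := Finset.sum_Icc_succ_top (a := 1) (b := n - 1)
      (f := fun j => (1 / u (j + 1) - 1 / u j - 1 / u 1)) (by omega)
    rw [h2] at h3
    rw [h3, ← ih (by omega)]
    push_cast
    ring

lemma w_sq_le (N : ℕ) (hN : 1 ≤ N) (u : ℕ → ℝ) {m : ℕ} (hm1 : 1 ≤ m) (hmN : m ≤ N) :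
    (1 / u m - (m : ℝ) * (1 / u 1)) ^ 2 ≤
      (N : ℝ) * ∑ j ∈ Finset.Icc 1 (N - 1), (1 / u (j + 1) - 1 / u j - 1 / u 1) ^ 2 := by
  rw [telescope_w N u m hm1 hmN]
  calc (∑ j ∈ Finset.Icc 1 (m - 1), (1 / u (j + 1) - 1 / u j - 1 / u 1)) ^ 2
      ≤ (Finset.Icc 1 (m - 1)).card *
          ∑ j ∈ Finset.Icc 1 (m - 1), (1 / u (j + 1) - 1 / u j - 1 / u 1) ^ 2 :=
        sq_sum_le_card_mul_sum_sq
    _ ≤ (N : ℝ) * ∑ j ∈ Finset.Icc 1 (N - 1), (1 / u (j + 1) - 1 / u j - 1 / u 1) ^ 2 := by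
        apply mul_le_mul
        · rw [Nat.card_Icc]
          have : m - 1 + 1 - 1 ≤ N := by omega
          exact_mod_cast this
        · apply Finset.sum_le_sum_of_subset_of_nonneg
          · apply Finset.Icc_subset_Icc_right
            omega
          · intro j _ _
            positivity
        · positivity
        · positivity

-- Section 10 : the main static inequality
set_option maxHeartbeats 1000000 in
lemma static_main (N : ℕ) (hN : 1 ≤ N) (u : ℕ → ℝ) (δ B E : ℝ) (hδ : 0 < δ)
    (hu : ∀ m ∈ Finset.Icc 1 N, δ ≤ u m ∧ u m ≤ B)
    (hE : E = ∑ m ∈ Finset.Icc 1 N, (m : ℝ) * u m) :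
    (0 ≤ (∑ m ∈ Finset.Icc 1 N, -Real.log (u m)) -
        ∑ m ∈ Finset.Icc 1 N, -Real.log (E / ((m : ℝ) * N))) ∧
    ((∑ m ∈ Finset.Icc 1 N, (u m - E / ((m : ℝ) * N)) ^ 2) ≤
        (2 * N * B * (B + N * B)) *
          ((∑ m ∈ Finset.Icc 1 N, -Real.log (u m)) -
            ∑ m ∈ Finset.Icc 1 N, -Real.log (E / ((m : ℝ) * N)))) ∧
    ((∑ m ∈ Finset.Icc 1 N, -Real.log (u m)) -
        (∑ m ∈ Finset.Icc 1 N, -Real.log (E / ((m : ℝ) * N))) ≤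
      ((N : ℝ) ^ 3 * B ^ 2 * (2 + 2 * N ^ 2 * B ^ 2 / δ ^ 2)) *
        ∑ j ∈ Finset.Icc 1 (N - 1), (1 / u (j + 1) - 1 / u j - 1 / u 1) ^ 2) := by
  have h1N : (1 : ℕ) ∈ Finset.Icc 1 N := Finset.mem_Icc.mpr ⟨le_refl 1, hN⟩
  have hB : δ ≤ B := le_trans (hu 1 h1N).1 (hu 1 h1N).2
  have hBpos : 0 < B := lt_of_lt_of_le hδ hB
  have hupos : ∀ m ∈ Finset.Icc 1 N, 0 < u m := fun m hm => lt_of_lt_of_le hδ (hu m hm).1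
  have hm1 : ∀ m ∈ Finset.Icc 1 N, 1 ≤ (m : ℝ) := by
    intro m hm
    have := (Finset.mem_Icc.mp hm).1
    exact_mod_cast this
  have hmN : ∀ m ∈ Finset.Icc 1 N, (m : ℝ) ≤ (N : ℝ) := by
    intro m hm
    have := (Finset.mem_Icc.mp hm).2
    exact_mod_cast this
  have hNpos : (0 : ℝ) < N := by
    have : (1 : ℝ) ≤ N := by exact_mod_cast hN
    linarith
  have hcard : ((Finset.Icc 1 N).card : ℝ) = (N : ℝ) := by
    rw [Nat.card_Icc]
    norm_cast
  have hEl : (N : ℝ) * δ ≤ E := by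
    rw [hE]
    calc (N : ℝ) * δ = ∑ _m ∈ Finset.Icc 1 N, δ := by
          rw [Finset.sum_const, nsmul_eq_mul, Nat.card_Icc]
          norm_cast
      _ ≤ ∑ m ∈ Finset.Icc 1 N, (m : ℝ) * u m := by
          refine Finset.sum_le_sum fun m hm => ?_
          nlinarith [hm1 m hm, (hu m hm).1, hupos m hm]
  have hEu : E ≤ (N : ℝ) * ((N : ℝ) * B) := by
    rw [hE]
    calc ∑ m ∈ Finset.Icc 1 N, (m : ℝ) * u m
        ≤ ∑ _m ∈ Finset.Icc 1 N, (N : ℝ) * B := by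
          refine Finset.sum_le_sum fun m hm => ?_
          have h2 := (hu m hm).2
          have h3 := hupos m hm
          nlinarith [hmN m hm]
      _ = (N : ℝ) * ((N : ℝ) * B) := by
          rw [Finset.sum_const, nsmul_eq_mul, Nat.card_Icc]
          norm_cast
  have hEpos : 0 < E := lt_of_lt_of_le (by positivity) hEl
  have hust_pos : ∀ m ∈ Finset.Icc 1 N, 0 < E / ((m : ℝ) * N) := by
    intro m hm
    have := hm1 m hm
    positivity
  have hust_ub : ∀ m ∈ Finset.Icc 1 N, E / ((m : ℝ) * N) ≤ (N : ℝ) * B := by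
    intro m hm
    rw [div_le_iff₀ (by nlinarith [hm1 m hm])]
    nlinarith [hm1 m hm, hmN m hm]
  -- the energy-ratio identity
  have hratio : ∑ m ∈ Finset.Icc 1 N, (1 - u m / (E / ((m : ℝ) * N))) = 0 := by
    rw [Finset.sum_sub_distrib]
    have h1 : ∑ _m ∈ Finset.Icc 1 N, (1 : ℝ) = (N : ℝ) := by
      rw [Finset.sum_const, nsmul_eq_mul, mul_one, hcard]
    have h2 : ∑ m ∈ Finset.Icc 1 N, u m / (E / ((m : ℝ) * N)) = (N : ℝ) := by
      have hper : ∀ m ∈ Finset.Icc 1 N, u m / (E / ((m : ℝ) * N)) =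
          ((m : ℝ) * u m) * ((N : ℝ) / E) := by
        intro m hm
        rw [div_div_eq_mul_div]
        field_simp
      rw [Finset.sum_congr rfl hper, ← Finset.sum_mul, ← hE]
      field_simp
    rw [h1, h2, sub_self]
  -- gap identity
  have hgap : (∑ m ∈ Finset.Icc 1 N, -Real.log (u m)) -
      (∑ m ∈ Finset.Icc 1 N, -Real.log (E / ((m : ℝ) * N))) =
      ∑ m ∈ Finset.Icc 1 N,
        (Real.log ((E / ((m : ℝ) * N)) / u m) - (1 - u m / (E / ((m : ℝ) * N)))) := by
    have h0 : ∀ m ∈ Finset.Icc 1 N, -Real.log (u m) - -Real.log (E / ((m : ℝ) * N)) =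
        Real.log ((E / ((m : ℝ) * N)) / u m) := by
      intro m hm
      rw [Real.log_div (hust_pos m hm).ne' (hupos m hm).ne']
      ring
    calc (∑ m ∈ Finset.Icc 1 N, -Real.log (u m)) -
        (∑ m ∈ Finset.Icc 1 N, -Real.log (E / ((m : ℝ) * N)))
        = ∑ m ∈ Finset.Icc 1 N,
            (-Real.log (u m) - -Real.log (E / ((m : ℝ) * N))) :=
          (Finset.sum_sub_distrib _ _).symm
      _ = ∑ m ∈ Finset.Icc 1 N, Real.log ((E / ((m : ℝ) * N)) / u m) :=
          Finset.sum_congr rfl h0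
      _ = ∑ m ∈ Finset.Icc 1 N, Real.log ((E / ((m : ℝ) * N)) / u m) -
            ∑ m ∈ Finset.Icc 1 N, (1 - u m / (E / ((m : ℝ) * N))) := by
          rw [hratio, sub_zero]
      _ = ∑ m ∈ Finset.Icc 1 N,
            (Real.log ((E / ((m : ℝ) * N)) / u m) - (1 - u m / (E / ((m : ℝ) * N)))) :=
          (Finset.sum_sub_distrib _ _).symm
  -- pointwise quantities
  have hy_pos : ∀ m ∈ Finset.Icc 1 N, 0 < (E / ((m : ℝ) * N)) / u m :=
    fun m hm => div_pos (hust_pos m hm) (hupos m hm)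
  have hyinv : ∀ m ∈ Finset.Icc 1 N,
      1 / ((E / ((m : ℝ) * N)) / u m) = u m / (E / ((m : ℝ) * N)) :=
    fun m hm => one_div_div _ _
  refine ⟨?_, ?_, ?_⟩
  -- (1) nonnegativity of the entropy gap
  · rw [hgap]
    refine Finset.sum_nonneg fun m hm => ?_
    have hl := log_ineq_lower (hy_pos m hm)
    rw [hyinv m hm] at hl
    refine le_trans ?_ hl
    have := hy_pos m hm
    positivity
  -- (2) distance controlled by the entropy gap
  · rw [hgap, Finset.mul_sum]
    refine Finset.sum_le_sum fun m hm => ?_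
    have hl := log_ineq_lower (hy_pos m hm)
    rw [hyinv m hm] at hl
    set st := E / ((m : ℝ) * N) with hst
    have hstpos : 0 < st := hust_pos m hm
    have hstub : st ≤ (N : ℝ) * B := hust_ub m hm
    have hup := hupos m hm
    have huub := (hu m hm).2
    have hiden : (st / u m - 1) ^ 2 / (2 * (st / u m) * (1 + st / u m)) =
        (u m - st) ^ 2 / (2 * st * (u m + st)) := by
      rw [div_eq_div_iff (by positivity) (by positivity)]
      field_simp
      ring
    rw [hiden] at hl
    have hq0 : (0:ℝ) ≤ (u m - st) ^ 2 / (2 * st * (u m + st)) := by positivity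
    have hconst : 2 * st * (u m + st) ≤ 2 * (N : ℝ) * B * (B + (N : ℝ) * B) := by
      nlinarith
    calc (u m - st) ^ 2
        = (2 * st * (u m + st)) * ((u m - st) ^ 2 / (2 * st * (u m + st))) := by
          field_simp
      _ ≤ (2 * (N : ℝ) * B * (B + (N : ℝ) * B)) *
            ((u m - st) ^ 2 / (2 * st * (u m + st))) := by
          apply mul_le_mul_of_nonneg_right hconst hq0
      _ ≤ (2 * (N : ℝ) * B * (B + (N : ℝ) * B)) *
            (Real.log (st / u m) - (1 - u m / st)) := by
          apply mul_le_mul_of_nonneg_left hl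
          positivity
  -- (3) entropy gap controlled by the dissipation
  · rw [hgap]
    set Diss := ∑ j ∈ Finset.Icc 1 (N - 1), (1 / u (j + 1) - 1 / u j - 1 / u 1) ^ 2 with hD
    have hDiss0 : 0 ≤ Diss := Finset.sum_nonneg fun j _ => sq_nonneg _
    set ρ : ℝ := (N : ℝ) / E with hρ
    have hρpos : 0 < ρ := by positivity
    have hρle : ρ ≤ 1 / δ := by
      rw [hρ, div_le_div_iff₀ hEpos hδ]
      nlinarith
    -- w-quantities
    set w : ℕ → ℝ := fun m => 1 / u m - (m : ℝ) * (1 / u 1) with hw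
    have hwsq : ∀ m ∈ Finset.Icc 1 N, w m ^ 2 ≤ (N : ℝ) * Diss := by
      intro m hm
      obtain ⟨ha, hb⟩ := Finset.mem_Icc.mp hm
      exact w_sq_le N hN u ha hb
    have hW : ∑ m ∈ Finset.Icc 1 N, w m ^ 2 ≤ (N : ℝ) ^ 2 * Diss := by
      calc ∑ m ∈ Finset.Icc 1 N, w m ^ 2 ≤ ∑ _m ∈ Finset.Icc 1 N, (N : ℝ) * Diss :=
            Finset.sum_le_sum hwsq
        _ = (N : ℝ) ^ 2 * Diss := by
            rw [Finset.sum_const, nsmul_eq_mul, Nat.card_Icc]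
            push_cast
            ring
    -- pinning of 1/u 1 near ρ
    have hsum2 : ∑ m ∈ Finset.Icc 1 N, u m * w m = (N : ℝ) - (1 / u 1) * E := by
      have hper : ∀ m ∈ Finset.Icc 1 N, u m * w m = 1 - ((m : ℝ) * u m) * (1 / u 1) := by
        intro m hm
        rw [hw]
        have := (hupos m hm).ne'
        field_simp
      rw [Finset.sum_congr rfl hper, Finset.sum_sub_distrib, ← Finset.sum_mul, ← hE]
      rw [Finset.sum_const, nsmul_eq_mul, mul_one, hcard]
      ring
    have hpin : (1 / u 1 - ρ) ^ 2 ≤ (B ^ 2 / (δ ^ 2 * N)) * ∑ m ∈ Finset.Icc 1 N, w m ^ 2 := by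
      have hiden2 : 1 / u 1 - ρ = -(ρ / N) * ∑ m ∈ Finset.Icc 1 N, u m * w m := by
        rw [hsum2, hρ]
        have hu1 := (hupos 1 h1N).ne'
        field_simp
        ring
      have hCS : (∑ m ∈ Finset.Icc 1 N, u m * w m) ^ 2 ≤
          (N : ℝ) * ∑ m ∈ Finset.Icc 1 N, (u m * w m) ^ 2 := by
        have := sq_sum_le_card_mul_sum_sq (s := Finset.Icc 1 N) (f := fun m => u m * w m)
        rwa [hcard] at this
      have hterm : ∑ m ∈ Finset.Icc 1 N, (u m * w m) ^ 2 ≤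
          B ^ 2 * ∑ m ∈ Finset.Icc 1 N, w m ^ 2 := by
        rw [Finset.mul_sum]
        refine Finset.sum_le_sum fun m hm => ?_
        have h2 := (hu m hm).2
        have h3 := (hu m hm).1
        have h4 : (u m * w m) ^ 2 = u m ^ 2 * w m ^ 2 := by ring
        rw [h4]
        have hu2 : u m ^ 2 ≤ B ^ 2 := by nlinarith
        exact mul_le_mul_of_nonneg_right hu2 (sq_nonneg _)
      rw [hiden2]
      have hWnn : (0:ℝ) ≤ ∑ m ∈ Finset.Icc 1 N, w m ^ 2 :=
        Finset.sum_nonneg fun m _ => sq_nonneg _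
      have h5 : (-(ρ / N) * ∑ m ∈ Finset.Icc 1 N, u m * w m) ^ 2 =
          (ρ / N) ^ 2 * (∑ m ∈ Finset.Icc 1 N, u m * w m) ^ 2 := by ring
      rw [h5]
      calc (ρ / N) ^ 2 * (∑ m ∈ Finset.Icc 1 N, u m * w m) ^ 2
          ≤ (ρ / N) ^ 2 * ((N : ℝ) * (B ^ 2 * ∑ m ∈ Finset.Icc 1 N, w m ^ 2)) := by
            apply mul_le_mul_of_nonneg_left _ (sq_nonneg _)
            calc (∑ m ∈ Finset.Icc 1 N, u m * w m) ^ 2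
                ≤ (N : ℝ) * ∑ m ∈ Finset.Icc 1 N, (u m * w m) ^ 2 := hCS
              _ ≤ (N : ℝ) * (B ^ 2 * ∑ m ∈ Finset.Icc 1 N, w m ^ 2) := by
                  apply mul_le_mul_of_nonneg_left hterm hNpos.le
        _ ≤ (B ^ 2 / (δ ^ 2 * N)) * ∑ m ∈ Finset.Icc 1 N, w m ^ 2 := by
            have hρ2 : ρ ^ 2 ≤ 1 / δ ^ 2 := by
              have := hρle
              have h6 : (1 / δ) ^ 2 = 1 / δ ^ 2 := by ring
              nlinarith [hρpos.le]
            have h7 : (ρ / N) ^ 2 * ((N : ℝ) * B ^ 2) ≤ B ^ 2 / (δ ^ 2 * N) := by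
              rw [div_pow, div_mul_eq_mul_div, div_le_div_iff₀ (by positivity) (by positivity)]
              calc ρ ^ 2 * ((N:ℝ) * B ^ 2) * (δ ^ 2 * N) = (ρ^2 * δ^2) * (B^2 * N^2) := by ring
                _ ≤ 1 * (B^2 * N^2) := by
                    apply mul_le_mul_of_nonneg_right _ (by positivity)
                    calc ρ^2 * δ^2 ≤ (1/δ^2) * δ^2 := by
                          apply mul_le_mul_of_nonneg_right hρ2 (by positivity)
                      _ = 1 := by field_simp
                _ = B ^ 2 * (N:ℝ) ^ 2 := by ring
            calc (ρ / N) ^ 2 * ((N : ℝ) * (B ^ 2 * ∑ m ∈ Finset.Icc 1 N, w m ^ 2))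
                = ((ρ / N) ^ 2 * ((N : ℝ) * B ^ 2)) * ∑ m ∈ Finset.Icc 1 N, w m ^ 2 := by
                  ring
              _ ≤ (B ^ 2 / (δ ^ 2 * N)) * ∑ m ∈ Finset.Icc 1 N, w m ^ 2 :=
                  mul_le_mul_of_nonneg_right h7 hWnn
    -- final chain
    have hperup : ∀ m ∈ Finset.Icc 1 N,
        Real.log ((E / ((m : ℝ) * N)) / u m) - (1 - u m / (E / ((m : ℝ) * N))) ≤
          (N : ℝ) * B ^ 2 * (1 / u m - (m : ℝ) * ρ) ^ 2 := by
      intro m hm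
      have hup := log_ineq_upper (hy_pos m hm)
      rw [hyinv m hm] at hup
      set st := E / ((m : ℝ) * N) with hst
      have hstpos : 0 < st := hust_pos m hm
      have hstub : st ≤ (N : ℝ) * B := hust_ub m hm
      have hu0 := hupos m hm
      have hub := (hu m hm).2
      have hinv : 1 / st = (m : ℝ) * ρ := by
        rw [hst, hρ, one_div_div]
        ring
      have hiden3 : (st / u m - 1) ^ 2 / (st / u m) =
          (u m * st) * (1 / u m - 1 / st) ^ 2 := by
        field_simp
      rw [hiden3, hinv] at hup
      refine le_trans hup ?_
      apply mul_le_mul_of_nonneg_right _ (sq_nonneg _)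
      nlinarith
    have hsplit : ∀ m ∈ Finset.Icc 1 N,
        (1 / u m - (m : ℝ) * ρ) ^ 2 ≤ 2 * w m ^ 2 + 2 * (N : ℝ) ^ 2 * (1 / u 1 - ρ) ^ 2 := by
      intro m hm
      have hdecomp : 1 / u m - (m : ℝ) * ρ = w m + (m : ℝ) * (1 / u 1 - ρ) := by
        rw [hw]
        ring
      rw [hdecomp]
      have hm2 : (m : ℝ) ^ 2 ≤ (N : ℝ) ^ 2 := by
        have := hmN m hm
        have := hm1 m hm
        nlinarith
      nlinarith [sq_nonneg (w m - (m : ℝ) * (1 / u 1 - ρ)), sq_nonneg ((m:ℝ) * (1/u 1 - ρ)),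
        sq_nonneg (1/u 1 - ρ), sq_nonneg (w m)]
    calc ∑ m ∈ Finset.Icc 1 N,
          (Real.log ((E / ((m : ℝ) * N)) / u m) - (1 - u m / (E / ((m : ℝ) * N))))
        ≤ ∑ m ∈ Finset.Icc 1 N, (N : ℝ) * B ^ 2 * (1 / u m - (m : ℝ) * ρ) ^ 2 :=
          Finset.sum_le_sum hperup
      _ ≤ ∑ m ∈ Finset.Icc 1 N,
            (N : ℝ) * B ^ 2 * (2 * w m ^ 2 + 2 * (N : ℝ) ^ 2 * (1 / u 1 - ρ) ^ 2) := by
          refine Finset.sum_le_sum fun m hm => ?_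
          apply mul_le_mul_of_nonneg_left (hsplit m hm) (by positivity)
      _ = (N : ℝ) * B ^ 2 * (2 * ∑ m ∈ Finset.Icc 1 N, w m ^ 2
            + 2 * (N : ℝ) ^ 2 * ((N : ℝ) * (1 / u 1 - ρ) ^ 2)) := by
          rw [← Finset.mul_sum, Finset.sum_add_distrib, ← Finset.mul_sum, Finset.sum_const,
            nsmul_eq_mul, hcard]
          ring
      _ ≤ ((N : ℝ) ^ 3 * B ^ 2 * (2 + 2 * N ^ 2 * B ^ 2 / δ ^ 2)) * Diss := by
          have hWle : ∑ m ∈ Finset.Icc 1 N, w m ^ 2 ≤ (N : ℝ) ^ 2 * Diss := hW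
          have hpin2 : (1 / u 1 - ρ) ^ 2 ≤ (B ^ 2 / (δ ^ 2 * N)) * ((N : ℝ) ^ 2 * Diss) := by
            refine le_trans hpin ?_
            apply mul_le_mul_of_nonneg_left hWle (by positivity)
          have hNn : (0:ℝ) < (N:ℝ) := hNpos
          have expand : (B ^ 2 / (δ ^ 2 * N)) * ((N : ℝ) ^ 2 * Diss) =
              (B ^ 2 * N / δ ^ 2) * Diss := by
            field_simp
          rw [expand] at hpin2
          have hWnn : (0:ℝ) ≤ ∑ m ∈ Finset.Icc 1 N, w m ^ 2 :=
            Finset.sum_nonneg fun m _ => sq_nonneg _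
          calc (N : ℝ) * B ^ 2 * (2 * ∑ m ∈ Finset.Icc 1 N, w m ^ 2
                + 2 * (N : ℝ) ^ 2 * ((N : ℝ) * (1 / u 1 - ρ) ^ 2))
              = 2 * (N : ℝ) * B ^ 2 * ∑ m ∈ Finset.Icc 1 N, w m ^ 2
                + 2 * (N : ℝ) ^ 4 * B ^ 2 * (1 / u 1 - ρ) ^ 2 := by ring
            _ ≤ 2 * (N : ℝ) * B ^ 2 * ((N : ℝ) ^ 2 * Diss)
                + 2 * (N : ℝ) ^ 4 * B ^ 2 * ((B ^ 2 * N / δ ^ 2) * Diss) := by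
                refine add_le_add ?_ ?_
                · exact mul_le_mul_of_nonneg_left hWle (by positivity)
                · exact mul_le_mul_of_nonneg_left hpin2 (by positivity)
            _ = ((N : ℝ) ^ 3 * B ^ 2 * (2 + 2 * N ^ 2 * B ^ 2 / δ ^ 2)) * Diss := by
                field_simp

-- Section 11 : ODE comparison helpers
lemma decay_of_deriv_le {F F' : ℝ → ℝ} (κ : ℝ)
    (hF : ∀ t ∈ Set.Ici (0 : ℝ), HasDerivAt F (F' t) t)
    (hle : ∀ t ∈ Set.Ici (0 : ℝ), F' t ≤ -κ * F t) :
    ∀ t ∈ Set.Ici (0 : ℝ), F t ≤ F 0 * Real.exp (-κ * t) := by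
  set G : ℝ → ℝ := fun t => F t * Real.exp (κ * t) with hG
  have hGd : ∀ t ∈ Set.Ici (0 : ℝ),
      HasDerivAt G ((F' t + κ * F t) * Real.exp (κ * t)) t := by
    intro t ht
    have he : HasDerivAt (fun s : ℝ => Real.exp (κ * s)) (Real.exp (κ * t) * κ) t := by
      have hid : HasDerivAt (fun s : ℝ => κ * s) κ t := by
        simpa using (hasDerivAt_id t).const_mul κ
      exact hid.exp
    have : HasDerivAt (fun y => F y * Real.exp (κ * y))
        (F' t * Real.exp (κ * t) + F t * (Real.exp (κ * t) * κ)) t := (hF t ht).fun_mul he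
    convert this using 1
    ring
  have hanti : AntitoneOn G (Set.Ici (0 : ℝ)) := by
    apply antitoneOn_of_deriv_nonpos (convex_Ici 0)
    · intro t ht
      exact (hGd t ht).continuousAt.continuousWithinAt
    · intro t ht
      rw [interior_Ici] at ht
      exact ((hGd t (Set.mem_Ici.mpr (le_of_lt ht))).differentiableAt).differentiableWithinAt
    · intro t ht
      rw [interior_Ici] at ht
      rw [(hGd t (Set.mem_Ici.mpr (le_of_lt ht))).deriv]
      have h1 := hle t (Set.mem_Ici.mpr (le_of_lt ht))
      have h2 : F' t + κ * F t ≤ 0 := by linarith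
      have h3 : (0:ℝ) < Real.exp (κ * t) := Real.exp_pos _
      nlinarith
  intro t ht
  have h4 : G t ≤ G 0 := hanti (Set.mem_Ici.mpr (le_refl 0)) ht ht
  have h5 : G 0 = F 0 := by simp [hG]
  rw [hG] at h4
  simp only [mul_zero, Real.exp_zero, mul_one] at h4
  have h6 : Real.exp (-κ * t) * Real.exp (κ * t) = 1 := by
    rw [← Real.exp_add]
    norm_num
  have h7 : 0 < Real.exp (κ * t) := Real.exp_pos _
  calc F t = F t * Real.exp (κ * t) * Real.exp (-κ * t) := by
        rw [mul_assoc, mul_comm (Real.exp (κ * t)), h6, mul_one]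
    _ ≤ F 0 * Real.exp (-κ * t) :=
        mul_le_mul_of_nonneg_right h4 (Real.exp_pos _).le

lemma const_of_deriv_zero {F F' : ℝ → ℝ}
    (hF : ∀ t ∈ Set.Ici (0 : ℝ), HasDerivAt F (F' t) t)
    (h0 : ∀ t ∈ Set.Ici (0 : ℝ), F' t = 0) :
    ∀ t ∈ Set.Ici (0 : ℝ), F t = F 0 := by
  intro t ht
  have h1 := decay_of_deriv_le 0 hF (fun t ht => by rw [h0 t ht]; norm_num) t ht
  have h2 := decay_of_deriv_le 0 (F := fun s => -F s) (F' := fun s => -F' s)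
    (fun t ht => (hF t ht).neg) (fun t ht => by rw [h0 t ht]; norm_num) t ht
  simp only [neg_zero, zero_mul, neg_mul, Real.exp_zero, mul_one] at h1 h2
  linarith

-- Section 12 : per-ray exponential convergence
lemma sum_rayF_weight {R : ℝ} {P : Fin 3 → ℤ} (hP : P ∈ latticeBall R)
    (w A : (Fin 3 → ℤ) → ℝ) :
    ∑ p1 ∈ latticeBall R, (if p1 ∈ rayF R P then w p1 else 0) * A p1 =
      ∑ q ∈ rayF R P, w q * A q := by
  have h1 : ∀ p1 ∈ latticeBall R, (if p1 ∈ rayF R P then w p1 else 0) * A p1 =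
      (if p1 ∈ rayF R P then w p1 * A p1 else 0) := by
    intro p1 _
    split_ifs with h
    · rfl
    · rw [zero_mul]
  rw [Finset.sum_congr rfl h1, Finset.sum_ite_mem,
    Finset.inter_eq_right.mpr (rayF_subset hP)]

noncomputable def Eray (R : ℝ) (f0 : (Fin 3 → ℤ) → ℝ) (P : Fin 3 → ℤ) : ℝ :=
  ∑ m ∈ Finset.Icc 1 (Nray R P), (m : ℝ) * f0 ((m : ℤ) • P)

set_option maxHeartbeats 2000000 in
lemma ray_convergence (R Λ Λstar : ℝ)
    (hmin : IsLeast {x : ℝ | ∃ p1 ∈ latticeBall R, ∃ p2 ∈ latticeBall R,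
      ∃ p3 ∈ latticeBall R, p1 = p2 + p3 ∧ enorm3 p1 ≠ enorm3 p2 + enorm3 p3 ∧
        x = |enorm3 p1 - enorm3 p2 - enorm3 p3|} Λstar)
    (hΛ0 : 0 ≤ Λ) (hΛ : Λ < Λstar)
    (f : ℝ → (Fin 3 → ℤ) → ℝ)
    (hsol : ∀ p ∈ latticeBall R, ∀ t : ℝ, 0 ≤ t →
      HasDerivAt (fun s => f s p) (QNR R Λ (f t) p) t)
    (hpos : ∀ p ∈ latticeBall R, ∀ t : ℝ, 0 ≤ t → 0 < f t p)
    {P : Fin 3 → ℤ} (hP : P ∈ latticeBall R) (hprim : gcd3 P = 1) :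
    ∃ C1 C2 : ℝ, 0 < C1 ∧ 0 < C2 ∧ ∀ t : ℝ, 0 ≤ t → ∀ m ∈ Finset.Icc 1 (Nray R P),
      |f t ((m : ℤ) • P) - Eray R (f 0) P / ((m : ℝ) * (Nray R P))| ≤
        C1 * Real.exp (-C2 * t) := by
  classical
  set N := Nray R P with hNdef
  have hN : 1 ≤ N := Nray_pos hP
  have hNR : (1:ℝ) ≤ (N:ℝ) := by exact_mod_cast hN
  have hmem : ∀ m ∈ Finset.Icc 1 N, ((m : ℤ) • P) ∈ latticeBall R := by
    intro m hm
    exact (smulP_mem_ball hP m).mpr (Finset.mem_Icc.mp hm)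
  have hsub := rayF_subset hP
  -- derivatives are given by Qres
  have hderiv : ∀ q ∈ rayF R P, ∀ t : ℝ, 0 ≤ t →
      HasDerivAt (fun s => f s q) (Qres R (f t) q) t := by
    intro q hq t ht
    have h1 := hsol q (hsub hq) t ht
    rwa [QNR_eq_Qres hmin hΛ0 hΛ (f t) (hsub hq)] at h1
  have hposray : ∀ t : ℝ, 0 ≤ t → ∀ q ∈ rayF R P, 0 < f t q :=
    fun t ht q hq => hpos q (hsub hq) t ht
  -- the energy functional is constant
  set EF : ℝ → ℝ := fun t => ∑ q ∈ rayF R P, (gcd3 q : ℝ) * f t q with hEF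
  have hEFd : ∀ t ∈ Set.Ici (0:ℝ), HasDerivAt EF
      (∑ q ∈ rayF R P, (gcd3 q : ℝ) * Qres R (f t) q) t := by
    intro t ht
    exact HasDerivAt.fun_sum fun q hq => ((hderiv q hq t ht).const_mul _)
  have hEFd0 : ∀ t ∈ Set.Ici (0:ℝ),
      (∑ q ∈ rayF R P, (gcd3 q : ℝ) * Qres R (f t) q) = 0 := by
    intro t _
    rw [← sum_rayF_weight hP (fun q => (gcd3 q : ℝ)) (Qres R (f t))]
    exact energy_sum_zero hP hprim (f t)
  have hEconst : ∀ t ∈ Set.Ici (0:ℝ), EF t = EF 0 :=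
    const_of_deriv_zero hEFd hEFd0
  -- energy in coordinates
  have hEFm : ∀ t : ℝ, EF t = ∑ m ∈ Finset.Icc 1 N, (m : ℝ) * f t ((m : ℤ) • P) := by
    intro t
    show (∑ q ∈ rayF R P, (gcd3 q : ℝ) * f t q) = _
    rw [sum_rayF hprim (fun q => (gcd3 q : ℝ) * f t q)]
    refine Finset.sum_congr rfl fun m _ => ?_
    rw [gcd3_nsmul_prim hprim m]
    norm_num
  set E0 : ℝ := EF 0 with hE0def
  have hE0eq : E0 = Eray R (f 0) P := by
    rw [hE0def, hEFm 0]
    rfl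
  have hE0pos : 0 < E0 := by
    rw [hE0def, hEFm 0]
    refine Finset.sum_pos (fun m hm => ?_) ⟨1, Finset.mem_Icc.mpr ⟨le_refl 1, hN⟩⟩
    have h1 : (0:ℝ) < (m:ℝ) := by
      have h1' := (Finset.mem_Icc.mp hm).1
      exact_mod_cast (by omega : 0 < m)
    exact mul_pos h1 (hpos _ (hmem m hm) 0 le_rfl)
  -- uniform upper bound
  set B : ℝ := max E0 1 with hBdef
  have hBpos : (0:ℝ) < B := lt_of_lt_of_le one_pos (le_max_right _ _)
  have hB1 : (1:ℝ) ≤ B := le_max_right _ _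
  have hub : ∀ t : ℝ, 0 ≤ t → ∀ m ∈ Finset.Icc 1 N, f t ((m : ℤ) • P) ≤ B := by
    intro t ht m hm
    have h1 : (m:ℝ) * f t ((m : ℤ) • P) ≤ E0 := by
      rw [← hEconst t ht, hEFm t]
      refine Finset.single_le_sum (f := fun m' : ℕ => (m' : ℝ) * f t ((m' : ℤ) • P))
        (fun m' hm' => ?_) hm
      have h2 : (0:ℝ) ≤ (m' : ℝ) := by positivity
      exact mul_nonneg h2 (hpos _ (hmem m' hm') t ht).le
    have h3 : (1:ℝ) ≤ (m:ℝ) := by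
      have := (Finset.mem_Icc.mp hm).1
      exact_mod_cast this
    have h4 := (hpos _ (hmem m hm) t ht)
    calc f t ((m : ℤ) • P) ≤ (m:ℝ) * f t ((m : ℤ) • P) := by nlinarith
      _ ≤ E0 := h1
      _ ≤ B := le_max_left _ _
  -- the entropy functional and its derivative
  set HF : ℝ → ℝ := fun t => ∑ q ∈ rayF R P, -Real.log (f t q) with hHF
  set HF' : ℝ → ℝ := fun t => ∑ q ∈ rayF R P, (-(1 / f t q)) * Qres R (f t) q with hHF'
  have hHFd : ∀ t ∈ Set.Ici (0:ℝ), HasDerivAt HF (HF' t) t := by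
    intro t ht
    refine HasDerivAt.fun_sum fun q hq => ?_
    have h1 := (hderiv q hq t ht).log (hposray t ht q hq).ne'
    have h2 := h1.fun_neg
    convert h2 using 1
    field_simp
  have hHF'val : ∀ t : ℝ, HF' t =
      ∑ p1 ∈ latticeBall R, (if p1 ∈ rayF R P then -(1 / f t p1) else 0) * Qres R (f t) p1 := by
    intro t
    show (∑ q ∈ rayF R P, (-(1 / f t q)) * Qres R (f t) q) = _
    exact (sum_rayF_weight hP (fun q => -(1 / f t q)) (Qres R (f t))).symm
  -- entropy decreasing
  have hHFdec : ∀ t ∈ Set.Ici (0:ℝ), HF t ≤ HF 0 := by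
    have hdec := decay_of_deriv_le 0 hHFd (fun t ht => ?_)
    · intro t ht
      have h9 := hdec t ht
      simpa using h9
    rw [neg_zero, zero_mul]
    show HF' t ≤ 0
    rw [hHF'val t]
    calc (∑ p1 ∈ latticeBall R,
          (if p1 ∈ rayF R P then -(1 / f t p1) else 0) * Qres R (f t) p1)
        ≤ ∑ j ∈ Finset.Icc 1 (N - 1),
          -(((j + 1 : ℕ) : ℝ) * ((j : ℕ) : ℝ) * enorm3 P ^ 3 *
            (uRay (f t) P (j + 1) * uRay (f t) P j * uRay (f t) P 1) *
            (1 / uRay (f t) P (j + 1) - 1 / uRay (f t) P j - 1 / uRay (f t) P 1) ^ 2) :=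
          entropy_dissip hP hprim (f t) (fun q hq => hpos q hq t ht)
      _ ≤ 0 := by
          refine Finset.sum_nonpos fun j hj => ?_
          rw [Finset.mem_Icc] at hj
          rw [neg_nonpos]
          have u1 := hpos _ ((smulP_mem_ball hP (j+1)).mpr ⟨by omega, by omega⟩) t ht
          have u2 := hpos _ ((smulP_mem_ball hP j).mpr ⟨by omega, by omega⟩) t ht
          have u3 := hpos _ ((smulP_mem_ball hP 1).mpr ⟨le_refl 1, hN⟩) t ht
          have e1 := enorm3_pos (ne_zero_of_mem_latticeBall hP)
          have hj1 : (0:ℝ) < ((j:ℕ):ℝ) := by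
            have hj1' := hj.1
            exact_mod_cast (by omega : 0 < j)
          positivity
  -- uniform lower bound
  set δ : ℝ := Real.exp (-(HF 0 + (N : ℝ) * Real.log B)) with hδdef
  have hδpos : 0 < δ := Real.exp_pos _
  have hlb : ∀ t : ℝ, 0 ≤ t → ∀ m ∈ Finset.Icc 1 N, δ ≤ f t ((m : ℤ) • P) := by
    intro t ht m hm
    have hmray : ((m : ℤ) • P) ∈ rayF R P := Finset.mem_image.mpr ⟨m, hm, rfl⟩
    have hcard : ((rayF R P).card : ℝ) ≤ (N : ℝ) := by
      have h1 : (rayF R P).card ≤ (Finset.Icc 1 N).card := Finset.card_image_le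
      have h2 : (Finset.Icc 1 N).card = N := by rw [Nat.card_Icc]; omega
      rw [h2] at h1
      exact_mod_cast h1
    have hkey : -Real.log (f t ((m : ℤ) • P)) + Real.log B ≤ HF t + (N : ℝ) * Real.log B := by
      have h1 : ∀ q ∈ rayF R P, (0:ℝ) ≤ -Real.log (f t q) + Real.log B := by
        intro q hq
        have h2 : f t q ≤ B := by
          obtain ⟨m', hm', rfl⟩ := Finset.mem_image.mp hq
          exact hub t ht m' hm'
        have h3 := Real.log_le_log (hposray t ht q hq) h2
        linarith
      have h4 := Finset.single_le_sum h1 hmray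
      have h5 : ∑ q ∈ rayF R P, (-Real.log (f t q) + Real.log B) =
          HF t + (rayF R P).card * Real.log B := by
        rw [Finset.sum_add_distrib, Finset.sum_const, nsmul_eq_mul, hHF]
      rw [h5] at h4
      refine le_trans h4 ?_
      have hlogB : 0 ≤ Real.log B := Real.log_nonneg hB1
      nlinarith
    have h6 : -Real.log (f t ((m : ℤ) • P)) ≤ HF 0 + (N : ℝ) * Real.log B := by
      have h7 := hHFdec t ht
      have hlogB : 0 ≤ Real.log B := Real.log_nonneg hB1
      nlinarith
    have h8 : -(HF 0 + (N : ℝ) * Real.log B) ≤ Real.log (f t ((m : ℤ) • P)) := by linarith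
    calc δ = Real.exp (-(HF 0 + (N : ℝ) * Real.log B)) := hδdef
      _ ≤ Real.exp (Real.log (f t ((m : ℤ) • P))) := Real.exp_le_exp.mpr h8
      _ = f t ((m : ℤ) • P) := Real.exp_log (hpos _ (hmem m hm) t ht)
  -- entropy in coordinates
  have hHFm : ∀ t : ℝ, HF t = ∑ m ∈ Finset.Icc 1 N, -Real.log (f t ((m : ℤ) • P)) := by
    intro t
    show (∑ q ∈ rayF R P, -Real.log (f t q)) = _
    exact sum_rayF hprim (fun q => -Real.log (f t q))
  -- apply the static inequalities at each time
  set Hstar : ℝ := ∑ m ∈ Finset.Icc 1 N, -Real.log (E0 / ((m : ℝ) * N)) with hHstar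
  set CL : ℝ := 2 * N * B * (B + N * B) with hCL
  set K : ℝ := (N : ℝ) ^ 3 * B ^ 2 * (2 + 2 * N ^ 2 * B ^ 2 / δ ^ 2) with hK
  have hCLpos : 0 < CL := by
    rw [hCL]
    positivity
  have hKpos : 0 < K := by
    rw [hK]
    positivity
  have hstatic : ∀ t : ℝ, 0 ≤ t →
      (0 ≤ HF t - Hstar) ∧
      ((∑ m ∈ Finset.Icc 1 N, (f t ((m : ℤ) • P) - E0 / ((m : ℝ) * N)) ^ 2) ≤
          CL * (HF t - Hstar)) ∧
      (HF t - Hstar ≤ K * ∑ j ∈ Finset.Icc 1 (N - 1),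
          (1 / f t (((j+1 : ℕ) : ℤ) • P) - 1 / f t ((j : ℤ) • P) -
            1 / f t (((1:ℕ) : ℤ) • P)) ^ 2) := by
    intro t ht
    have hu : ∀ m ∈ Finset.Icc 1 N, δ ≤ f t ((m : ℤ) • P) ∧ f t ((m : ℤ) • P) ≤ B :=
      fun m hm => ⟨hlb t ht m hm, hub t ht m hm⟩
    have hE : E0 = ∑ m ∈ Finset.Icc 1 N, (m : ℝ) * f t ((m : ℤ) • P) := by
      rw [← hEconst t ht, hEFm t]
    have := static_main N hN (fun m => f t ((m : ℤ) • P)) δ B E0 hδpos hu hE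
    rw [← hHFm t] at this
    exact this
  -- the differential inequality for the entropy gap
  set κ : ℝ := enorm3 P ^ 3 * δ ^ 3 / K with hκ
  have hPn := enorm3_pos (ne_zero_of_mem_latticeBall hP)
  have hκpos : 0 < κ := by
    rw [hκ]
    positivity
  set G : ℝ → ℝ := fun t => HF t - Hstar with hG
  have hGd : ∀ t ∈ Set.Ici (0:ℝ), HasDerivAt G (HF' t) t :=
    fun t ht => (hHFd t ht).sub_const _
  have hGdec : ∀ t ∈ Set.Ici (0:ℝ), G t ≤ G 0 * Real.exp (-κ * t) := by
    refine decay_of_deriv_le κ hGd fun t ht => ?_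
    have ht' : (0:ℝ) ≤ t := ht
    -- dissipation lower bound
    have hdis : HF' t ≤ -(enorm3 P ^ 3 * δ ^ 3) *
        ∑ j ∈ Finset.Icc 1 (N - 1),
          (1 / f t (((j+1 : ℕ) : ℤ) • P) - 1 / f t ((j : ℤ) • P) -
            1 / f t (((1:ℕ) : ℤ) • P)) ^ 2 := by
      rw [hHF'val t]
      refine le_trans (entropy_dissip hP hprim (f t) (fun q hq => hpos q hq t ht')) ?_
      rw [neg_mul, Finset.mul_sum, ← Finset.sum_neg_distrib]
      refine Finset.sum_le_sum fun j hj => ?_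
      rw [Finset.mem_Icc] at hj
      rw [neg_le_neg_iff]
      have hj1 : (1:ℝ) ≤ ((j:ℕ):ℝ) := by exact_mod_cast hj.1
      have hu1m : δ ≤ uRay (f t) P (j+1) ∧ uRay (f t) P (j+1) ≤ B :=
        ⟨hlb t ht' (j+1) (Finset.mem_Icc.mpr ⟨by omega, by omega⟩),
         hub t ht' (j+1) (Finset.mem_Icc.mpr ⟨by omega, by omega⟩)⟩
      have hu2m : δ ≤ uRay (f t) P j ∧ uRay (f t) P j ≤ B :=
        ⟨hlb t ht' j (Finset.mem_Icc.mpr ⟨by omega, by omega⟩),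
         hub t ht' j (Finset.mem_Icc.mpr ⟨by omega, by omega⟩)⟩
      have hu3m : δ ≤ uRay (f t) P 1 ∧ uRay (f t) P 1 ≤ B :=
        ⟨hlb t ht' 1 (Finset.mem_Icc.mpr ⟨le_refl 1, hN⟩),
         hub t ht' 1 (Finset.mem_Icc.mpr ⟨le_refl 1, hN⟩)⟩
      have hsq : (0:ℝ) ≤ (1 / uRay (f t) P (j + 1) - 1 / uRay (f t) P j -
          1 / uRay (f t) P 1) ^ 2 := sq_nonneg _
      have hcoef : enorm3 P ^ 3 * δ ^ 3 ≤
          ((j + 1 : ℕ) : ℝ) * ((j : ℕ) : ℝ) * enorm3 P ^ 3 *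
            (uRay (f t) P (j + 1) * uRay (f t) P j * uRay (f t) P 1) := by
        have hjj : (1:ℝ) ≤ ((j + 1 : ℕ) : ℝ) * ((j : ℕ) : ℝ) := by
          have hja : (1:ℝ) ≤ ((j : ℕ) : ℝ) := by exact_mod_cast hj.1
          have hjb : (1:ℝ) ≤ ((j + 1 : ℕ) : ℝ) := by exact_mod_cast (by omega : 1 ≤ j + 1)
          nlinarith
        have hprod : δ ^ 3 ≤ uRay (f t) P (j + 1) * uRay (f t) P j * uRay (f t) P 1 := by
          have a1 := hu1m.1
          have a2 := hu2m.1
          have a3 := hu3m.1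
          have h12 : δ * δ ≤ uRay (f t) P (j + 1) * uRay (f t) P j :=
            mul_le_mul a1 a2 hδpos.le (le_trans hδpos.le a1)
          have h123 : (δ * δ) * δ ≤ (uRay (f t) P (j + 1) * uRay (f t) P j) * uRay (f t) P 1 :=
            mul_le_mul h12 a3 hδpos.le
              (mul_nonneg (le_trans hδpos.le a1) (le_trans hδpos.le a2))
          calc δ ^ 3 = δ * δ * δ := by ring
            _ ≤ _ := h123
        calc enorm3 P ^ 3 * δ ^ 3
            ≤ enorm3 P ^ 3 * (uRay (f t) P (j + 1) * uRay (f t) P j * uRay (f t) P 1) :=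
              mul_le_mul_of_nonneg_left hprod (pow_pos hPn 3).le
          _ ≤ (((j + 1 : ℕ) : ℝ) * ((j : ℕ) : ℝ)) *
                (enorm3 P ^ 3 * (uRay (f t) P (j + 1) * uRay (f t) P j * uRay (f t) P 1)) := by
              apply le_mul_of_one_le_left _ hjj
              have b1 := lt_of_lt_of_le hδpos hu1m.1
              have b2 := lt_of_lt_of_le hδpos hu2m.1
              have b3 := lt_of_lt_of_le hδpos hu3m.1
              positivity
          _ = ((j + 1 : ℕ) : ℝ) * ((j : ℕ) : ℝ) * enorm3 P ^ 3 *
                (uRay (f t) P (j + 1) * uRay (f t) P j * uRay (f t) P 1) := by ring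
      have hexpand : (1 / f t (((j+1 : ℕ) : ℤ) • P) - 1 / f t ((j : ℤ) • P) -
          1 / f t (((1:ℕ) : ℤ) • P)) ^ 2 =
          (1 / uRay (f t) P (j + 1) - 1 / uRay (f t) P j - 1 / uRay (f t) P 1) ^ 2 := rfl
      rw [hexpand]
      exact mul_le_mul_of_nonneg_right hcoef hsq
    obtain ⟨hg0, _, hg2⟩ := hstatic t ht'
    have hdiss_ge : (enorm3 P ^ 3 * δ ^ 3) / K * G t ≤ (enorm3 P ^ 3 * δ ^ 3) *
        ∑ j ∈ Finset.Icc 1 (N - 1),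
          (1 / f t (((j+1 : ℕ) : ℤ) • P) - 1 / f t ((j : ℤ) • P) -
            1 / f t (((1:ℕ) : ℤ) • P)) ^ 2 := by
      rw [div_mul_eq_mul_div, div_le_iff₀ hKpos]
      calc enorm3 P ^ 3 * δ ^ 3 * G t
          ≤ enorm3 P ^ 3 * δ ^ 3 * (K * ∑ j ∈ Finset.Icc 1 (N - 1),
              (1 / f t (((j+1 : ℕ) : ℤ) • P) - 1 / f t ((j : ℤ) • P) -
                1 / f t (((1:ℕ) : ℤ) • P)) ^ 2) := by
            apply mul_le_mul_of_nonneg_left hg2 (by positivity)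
        _ = enorm3 P ^ 3 * δ ^ 3 * (∑ j ∈ Finset.Icc 1 (N - 1),
              (1 / f t (((j+1 : ℕ) : ℤ) • P) - 1 / f t ((j : ℤ) • P) -
                1 / f t (((1:ℕ) : ℤ) • P)) ^ 2) * K := by ring
    calc HF' t ≤ -(enorm3 P ^ 3 * δ ^ 3) * ∑ j ∈ Finset.Icc 1 (N - 1),
          (1 / f t (((j+1 : ℕ) : ℤ) • P) - 1 / f t ((j : ℤ) • P) -
            1 / f t (((1:ℕ) : ℤ) • P)) ^ 2 := hdis
      _ ≤ -κ * G t := by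
          rw [hκ]
          have := hdiss_ge
          linarith [hdiss_ge]
  -- conclusion
  refine ⟨Real.sqrt (CL * G 0) + 1, κ / 2, by positivity, by positivity, ?_⟩
  intro t ht m hm
  have hsm := hstatic t ht
  have hsq : (f t ((m : ℤ) • P) - E0 / ((m : ℝ) * N)) ^ 2 ≤ CL * (G 0 * Real.exp (-κ * t)) := by
    have h1 : (f t ((m : ℤ) • P) - E0 / ((m : ℝ) * N)) ^ 2 ≤
        ∑ m' ∈ Finset.Icc 1 N, (f t ((m' : ℤ) • P) - E0 / ((m' : ℝ) * N)) ^ 2 :=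
      Finset.single_le_sum (f := fun m' : ℕ => (f t ((m' : ℤ) • P) - E0 / ((m' : ℝ) * N)) ^ 2)
        (fun m' _ => sq_nonneg _) hm
    refine le_trans h1 (le_trans hsm.2.1 ?_)
    exact mul_le_mul_of_nonneg_left (hGdec t ht) hCLpos.le
  have hG0 : 0 ≤ G 0 := (hstatic 0 le_rfl).1
  have habs : |f t ((m : ℤ) • P) - E0 / ((m : ℝ) * N)| ≤
      Real.sqrt (CL * G 0) * Real.exp (-(κ/2) * t) := by
    rw [← Real.sqrt_sq_eq_abs]
    have h2 : CL * (G 0 * Real.exp (-κ * t)) =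
        (Real.sqrt (CL * G 0) * Real.exp (-(κ/2) * t)) ^ 2 := by
      rw [mul_pow, Real.sq_sqrt (by positivity), sq, ← Real.exp_add]
      rw [show -(κ/2) * t + -(κ/2) * t = -κ * t from by ring]
      ring
    rw [h2] at hsq
    exact Real.sqrt_le_sqrt hsq |>.trans (by rw [Real.sqrt_sq (by positivity)])
  rw [← hE0eq]
  refine le_trans habs ?_
  apply mul_le_mul_of_nonneg_right _ (Real.exp_pos _).le
  linarith [Real.sqrt_nonneg (CL * G 0)]

-- Section 13 : assembly helpers
lemma prim_mem_ball {R : ℝ} {p : Fin 3 → ℤ} (hp : p ∈ latticeBall R) :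
    prim p ∈ latticeBall R := by
  have hpne : p ≠ 0 := ne_zero_of_mem_latticeBall hp
  have hg := gcd3_pos hpne
  rw [mem_latticeBall]
  obtain ⟨hq1, hq2⟩ := mem_latticeBall.mp hp
  have h1 : 0 < enorm3 (prim p) := enorm3_pos (prim_ne_zero hpne)
  refine ⟨h1, lt_of_le_of_lt ?_ hq2⟩
  have hdec : p = (((gcd3 p).toNat : ℕ) : ℤ) • prim p := by
    funext i
    simp only [Pi.smul_apply, smul_eq_mul]
    rw [Int.toNat_of_nonneg (gcd3_nonneg p)]
    exact prim_spec hpne i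
  conv_rhs => rw [hdec]
  rw [enorm3_nsmul]
  have h2 : (1 : ℝ) ≤ ((gcd3 p).toNat : ℕ) := by
    have : 1 ≤ (gcd3 p).toNat := by omega
    exact_mod_cast this
  nlinarith

lemma ball_decomp {R : ℝ} {p : Fin 3 → ℤ} (hp : p ∈ latticeBall R) :
    ∃ g : ℕ, g ∈ Finset.Icc 1 (Nray R (prim p)) ∧ p = (g : ℤ) • prim p ∧
      (gcd3 p : ℝ) = (g : ℝ) := by
  have hpne : p ≠ 0 := ne_zero_of_mem_latticeBall hp
  have hmem : p ∈ rayF R (prim p) :=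
    (mem_rayF (prim_mem_ball hp) (gcd3_prim hpne)).mpr ⟨hp, rfl⟩
  obtain ⟨g, hg, hgp⟩ := Finset.mem_image.mp hmem
  refine ⟨g, hg, hgp.symm, ?_⟩
  have h1 : gcd3 p = (g : ℤ) := by
    rw [← hgp, gcd3_nsmul_prim (gcd3_prim hpne)]
  rw [h1]
  norm_num

lemma Eray_pos {R : ℝ} {P : Fin 3 → ℤ} (hP : P ∈ latticeBall R)
    (f0 : (Fin 3 → ℤ) → ℝ) (hpos0 : ∀ q ∈ latticeBall R, 0 < f0 q) :
    0 < Eray R f0 P := by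
  rw [Eray]
  refine Finset.sum_pos (fun m hm => ?_) ⟨1, Finset.mem_Icc.mpr ⟨le_refl 1, Nray_pos hP⟩⟩
  have hm1 := (Finset.mem_Icc.mp hm).1
  have h1 : (0:ℝ) < (m:ℝ) := by exact_mod_cast (by omega : 0 < m)
  exact mul_pos h1 (hpos0 _ ((smulP_mem_ball hP m).mpr (Finset.mem_Icc.mp hm)))

/-- `prim p` lies on the open ray through `p`. -/
lemma prim_onRay {p : Fin 3 → ℤ} (hp : p ≠ 0) : OnRay p (prim p) := by
  have hg := gcd3_pos hp
  refine ⟨1 / (gcd3 p : ℝ), by positivity, fun i => ?_⟩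
  have h1 : (p i : ℝ) = (gcd3 p : ℝ) * (prim p i : ℝ) := by
    have := prim_spec hp i
    exact_mod_cast congrArg (fun z : ℤ => (z : ℝ)) this
  rw [h1]
  have h2 : (gcd3 p : ℝ) ≠ 0 := by positivity
  field_simp

/-- The minimal-norm lattice point on the ray of `p` is `prim p`. -/
lemma minimal_ray_eq_prim {p P : Fin 3 → ℤ} (hp : p ≠ 0) (honray : OnRay p P)
    (hmin : ∀ Q : Fin 3 → ℤ, OnRay p Q → enorm3 P ≤ enorm3 Q) : P = prim p := by
  obtain ⟨s, hs, hsP⟩ := honray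
  obtain ⟨m, hm, hmP⟩ := lattice_on_ray hp hs hsP
  have hle := hmin (prim p) (prim_onRay hp)
  rw [hmP, enorm3_nsmul] at hle
  have hpr : 0 < enorm3 (prim p) := enorm3_pos (prim_ne_zero hp)
  have hm1 : (m : ℝ) ≤ 1 := by nlinarith
  have hmeq : m = 1 := by
    have : m ≤ 1 := by exact_mod_cast hm1
    omega
  rw [hmP, hmeq]
  norm_num

-- Section 14 : the equilibrium
noncomputable def fstarF (R : ℝ) (f0 : (Fin 3 → ℤ) → ℝ) (q : Fin 3 → ℤ) : ℝ :=
  if q ∈ latticeBall R then Eray R f0 (prim q) / ((gcd3 q : ℝ) * (Nray R (prim q))) else 1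

lemma fstarF_val {R : ℝ} (f0 : (Fin 3 → ℤ) → ℝ) {Q : Fin 3 → ℤ} (hQ1 : gcd3 Q = 1)
    {m : ℕ} (hm : 0 < m) (hmem : ((m : ℤ) • Q) ∈ latticeBall R) :
    fstarF R f0 ((m : ℤ) • Q) = Eray R f0 Q / ((m : ℝ) * (Nray R Q)) := by
  rw [fstarF, if_pos hmem, prim_nsmul hQ1 hm, gcd3_nsmul_prim hQ1]
  norm_num

lemma base_mem_ball {R : ℝ} {Q : Fin 3 → ℤ} {a : ℕ} (ha : 0 < a) (hQ0 : Q ≠ 0)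
    (h : ((a : ℤ) • Q) ∈ latticeBall R) : Q ∈ latticeBall R := by
  rw [mem_latticeBall] at h ⊢
  obtain ⟨h1, h2⟩ := h
  rw [enorm3_nsmul] at h1 h2
  have hQpos : 0 < enorm3 Q := enorm3_pos hQ0
  refine ⟨hQpos, lt_of_le_of_lt ?_ h2⟩
  have ha1 : (1:ℝ) ≤ (a:ℝ) := by exact_mod_cast ha
  nlinarith

lemma Qres_fstar_zero {R : ℝ} (f0 : (Fin 3 → ℤ) → ℝ) {p : Fin 3 → ℤ}
    (hp : p ∈ latticeBall R) : Qres R (fstarF R f0) p = 0 := by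
  unfold Qres
  have hsum1 : (∑ p2 ∈ latticeBall R, ∑ p3 ∈ latticeBall R,
      if p = p2 + p3 ∧ enorm3 p = enorm3 p2 + enorm3 p3 then
        enorm3 p * enorm3 p2 * enorm3 p3 *
          (fstarF R f0 p2 * fstarF R f0 p3 -
            fstarF R f0 p * (fstarF R f0 p2 + fstarF R f0 p3)) else 0) = 0 := by
    refine Finset.sum_eq_zero fun p2 h2 => Finset.sum_eq_zero fun p3 h3 => ?_
    by_cases h : p = p2 + p3 ∧ enorm3 p = enorm3 p2 + enorm3 p3
    case neg => rw [if_neg h]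
    rw [if_pos h]
    obtain ⟨Q, a, b, hQ1, hQ0, ha, hb, e2, e3, e1⟩ := triple_decomp h2 h3 h
    have hQball : Q ∈ latticeBall R := base_mem_ball ha hQ0 (by rw [← e2]; exact h2)
    have hNQ : (1:ℝ) ≤ (Nray R Q : ℝ) := by exact_mod_cast Nray_pos hQball
    have v1 : fstarF R f0 p = Eray R f0 Q / (((a + b : ℕ) : ℝ) * (Nray R Q)) := by
      rw [e1]
      exact fstarF_val f0 hQ1 (by omega) (by rw [← e1]; exact hp)
    have v2 : fstarF R f0 p2 = Eray R f0 Q / ((a : ℝ) * (Nray R Q)) := by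
      rw [e2]
      exact fstarF_val f0 hQ1 ha (by rw [← e2]; exact h2)
    have v3 : fstarF R f0 p3 = Eray R f0 Q / ((b : ℝ) * (Nray R Q)) := by
      rw [e3]
      exact fstarF_val f0 hQ1 hb (by rw [← e3]; exact h3)
    rw [v1, v2, v3]
    have ha' : (0:ℝ) < (a:ℝ) := by exact_mod_cast ha
    have hb' : (0:ℝ) < (b:ℝ) := by exact_mod_cast hb
    have hab' : ((a + b : ℕ) : ℝ) = (a:ℝ) + (b:ℝ) := by push_cast; ring
    have hbr : Eray R f0 Q / ((a : ℝ) * (Nray R Q)) * (Eray R f0 Q / ((b : ℝ) * (Nray R Q))) -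
        Eray R f0 Q / (((a + b : ℕ) : ℝ) * (Nray R Q)) *
          (Eray R f0 Q / ((a : ℝ) * (Nray R Q)) + Eray R f0 Q / ((b : ℝ) * (Nray R Q))) = 0 := by
      rw [hab']
      field_simp
      ring
    rw [hbr, mul_zero]
  have hsum2 : (∑ p2 ∈ latticeBall R, ∑ p3 ∈ latticeBall R,
      if p3 = p + p2 ∧ enorm3 p3 = enorm3 p + enorm3 p2 then
        enorm3 p * enorm3 p2 * enorm3 p3 *
          (fstarF R f0 p * fstarF R f0 p2 -
            fstarF R f0 p3 * (fstarF R f0 p + fstarF R f0 p2)) else 0) = 0 := by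
    refine Finset.sum_eq_zero fun p2 h2 => Finset.sum_eq_zero fun p3 h3 => ?_
    by_cases h : p3 = p + p2 ∧ enorm3 p3 = enorm3 p + enorm3 p2
    case neg => rw [if_neg h]
    rw [if_pos h]
    obtain ⟨Q, a, b, hQ1, hQ0, ha, hb, e2, e3, e1⟩ := triple_decomp hp h2 h
    have hQball : Q ∈ latticeBall R := base_mem_ball ha hQ0 (by rw [← e2]; exact hp)
    have hNQ : (1:ℝ) ≤ (Nray R Q : ℝ) := by exact_mod_cast Nray_pos hQball
    have v1 : fstarF R f0 p = Eray R f0 Q / ((a : ℝ) * (Nray R Q)) := by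
      rw [e2]
      exact fstarF_val f0 hQ1 ha (by rw [← e2]; exact hp)
    have v2 : fstarF R f0 p2 = Eray R f0 Q / ((b : ℝ) * (Nray R Q)) := by
      rw [e3]
      exact fstarF_val f0 hQ1 hb (by rw [← e3]; exact h2)
    have v3 : fstarF R f0 p3 = Eray R f0 Q / (((a + b : ℕ) : ℝ) * (Nray R Q)) := by
      rw [e1]
      exact fstarF_val f0 hQ1 (by omega) (by rw [← e1]; exact h3)
    rw [v1, v2, v3]
    have ha' : (0:ℝ) < (a:ℝ) := by exact_mod_cast ha
    have hb' : (0:ℝ) < (b:ℝ) := by exact_mod_cast hb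
    have hab' : ((a + b : ℕ) : ℝ) = (a:ℝ) + (b:ℝ) := by push_cast; ring
    have hbr : Eray R f0 Q / ((a : ℝ) * (Nray R Q)) * (Eray R f0 Q / ((b : ℝ) * (Nray R Q))) -
        Eray R f0 Q / (((a + b : ℕ) : ℝ) * (Nray R Q)) *
          (Eray R f0 Q / ((a : ℝ) * (Nray R Q)) + Eray R f0 Q / ((b : ℝ) * (Nray R Q))) = 0 := by
      rw [hab']
      field_simp
      ring
    rw [hbr, mul_zero]
  rw [hsum1, hsum2]
  ring

/-- Convergence to equilibrium for the discrete near-resonance acoustic kinetic system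
with broadening below the threshold `Λ_*`: every positive solution converges
exponentially fast to an equilibrium `f*` which, along each ray `{kP}` (with `P` the
lattice point of minimal norm on the ray), has the form `f*_{kP} = 1/(k ρ(P))`. -/
theorem convergence_to_equilibrium_near_resonance (R : ℝ) (hR : 0 < R) (Λstar : ℝ)
    (hmin : IsLeast {x : ℝ | ∃ p1 ∈ latticeBall R, ∃ p2 ∈ latticeBall R,
      ∃ p3 ∈ latticeBall R, p1 = p2 + p3 ∧ enorm3 p1 ≠ enorm3 p2 + enorm3 p3 ∧
        x = |enorm3 p1 - enorm3 p2 - enorm3 p3|} Λstar)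
    (Λ : ℝ) (hΛ0 : 0 ≤ Λ) (hΛ : Λ < Λstar)
    (f : ℝ → (Fin 3 → ℤ) → ℝ)
    (hsol : ∀ p ∈ latticeBall R, ∀ t : ℝ, 0 ≤ t →
      HasDerivAt (fun s => f s p) (QNR R Λ (f t) p) t)
    (hpos : ∀ p ∈ latticeBall R, ∀ t : ℝ, 0 ≤ t → 0 < f t p) :
    ∃ (fstar : (Fin 3 → ℤ) → ℝ) (ρ : (Fin 3 → ℤ) → ℝ),
      (∀ p ∈ latticeBall R, 0 < fstar p) ∧
      (∀ p ∈ latticeBall R, QNR R Λ fstar p = 0) ∧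
      (∀ p ∈ latticeBall R, ∀ (P : Fin 3 → ℤ) (k : ℕ), 0 < k → p = (k : ℤ) • P →
        OnRay p P → (∀ Q : Fin 3 → ℤ, OnRay p Q → enorm3 P ≤ enorm3 Q) →
        0 < ρ P ∧ fstar p = 1 / ((k : ℝ) * ρ P)) ∧
      ∃ C1 C2 : ℝ, 0 < C1 ∧ 0 < C2 ∧
        ∀ t : ℝ, 0 ≤ t → ∀ p ∈ latticeBall R,
          |f t p - fstar p| ≤ C1 * Real.exp (-C2 * t) := by
  classical
  obtain ⟨q1, hq1, -⟩ := hmin.1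
  have hballne : (latticeBall R).Nonempty := ⟨q1, hq1⟩
  have hpos0 : ∀ q ∈ latticeBall R, 0 < f 0 q := fun q hq => hpos q hq 0 le_rfl
  refine ⟨fstarF R (f 0), fun P => (Nray R P : ℝ) / Eray R (f 0) P, ?_, ?_, ?_, ?_⟩
  · intro p hp
    rw [fstarF, if_pos hp]
    have h1 := Eray_pos (prim_mem_ball hp) (f 0) hpos0
    have h2 : (0:ℝ) < ((gcd3 p : ℤ) : ℝ) := by
      exact_mod_cast gcd3_pos (ne_zero_of_mem_latticeBall hp)
    have h3 : (0:ℝ) < (Nray R (prim p) : ℝ) := by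
      exact_mod_cast Nray_pos (prim_mem_ball hp)
    positivity
  · intro p hp
    rw [QNR_eq_Qres hmin hΛ0 hΛ _ hp]
    exact Qres_fstar_zero (f 0) hp
  · intro p hp P k hk hpk honray hminray
    have hpne := ne_zero_of_mem_latticeBall hp
    have hPprim : P = prim p := minimal_ray_eq_prim hpne honray hminray
    have hprim1 : gcd3 P = 1 := by rw [hPprim]; exact gcd3_prim hpne
    have hPball : P ∈ latticeBall R := by rw [hPprim]; exact prim_mem_ball hp
    have hEpos := Eray_pos hPball (f 0) hpos0
    have hNpos : (0:ℝ) < (Nray R P : ℝ) := by exact_mod_cast Nray_pos hPball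
    constructor
    · positivity
    · have hval : fstarF R (f 0) p = Eray R (f 0) P / ((k : ℝ) * (Nray R P)) := by
        conv_lhs => rw [hpk]
        exact fstarF_val (f 0) hprim1 hk (by rw [← hpk]; exact hp)
      rw [hval]
      have hk' : (0:ℝ) < (k:ℝ) := by exact_mod_cast hk
      rw [div_eq_div_iff (by positivity) (by positivity), one_mul]
      field_simp
  · have hconv : ∀ p : Fin 3 → ℤ, ∃ C1 C2 : ℝ, 0 < C1 ∧ 0 < C2 ∧
        (p ∈ latticeBall R → ∀ t : ℝ, 0 ≤ t →
          |f t p - fstarF R (f 0) p| ≤ C1 * Real.exp (-C2 * t)) := by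
      intro p
      by_cases hp : p ∈ latticeBall R
      · have hpne := ne_zero_of_mem_latticeBall hp
        obtain ⟨C1, C2, hC1, hC2, hbd⟩ := ray_convergence R Λ Λstar hmin hΛ0 hΛ f hsol hpos
          (prim_mem_ball hp) (gcd3_prim hpne)
        obtain ⟨g, hgIcc, hgdec, hgcast⟩ := ball_decomp hp
        refine ⟨C1, C2, hC1, hC2, fun _ t ht => ?_⟩
        have h1 := hbd t ht g hgIcc
        rw [← hgdec] at h1
        have hval : fstarF R (f 0) p =
            Eray R (f 0) (prim p) / ((g : ℝ) * (Nray R (prim p))) := by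
          conv_lhs => rw [hgdec]
          refine fstarF_val (f 0) (gcd3_prim hpne) ?_ (by rw [← hgdec]; exact hp)
          have := (Finset.mem_Icc.mp hgIcc).1
          omega
        rw [hval]
        exact h1
      · exact ⟨1, 1, one_pos, one_pos, fun h => absurd h hp⟩
    choose C1f C2f hC1f hC2f hbdf using hconv
    set C2 : ℝ := ((latticeBall R).image C2f).min' (hballne.image C2f) with hC2def
    have hC2mem := ((latticeBall R).image C2f).min'_mem (hballne.image C2f)
    obtain ⟨pmin, hpmin, hpeq⟩ := Finset.mem_image.mp hC2mem
    have hC2pos : 0 < C2 := by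
      rw [hC2def, ← hpeq]
      exact hC2f pmin
    set C1 : ℝ := ∑ p ∈ latticeBall R, C1f p with hC1def
    have hC1pos : 0 < C1 := Finset.sum_pos (fun p _ => hC1f p) hballne
    refine ⟨C1, C2, hC1pos, hC2pos, ?_⟩
    intro t ht p hp
    have h1 := hbdf p hp t ht
    refine le_trans h1 ?_
    have h2 : C1f p ≤ C1 :=
      Finset.single_le_sum (f := fun p' => C1f p') (fun p' _ => (hC1f p').le) hp
    have h3 : Real.exp (-C2f p * t) ≤ Real.exp (-C2 * t) := by
      apply Real.exp_le_exp.mpr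
      have h4 : C2 ≤ C2f p := by
        rw [hC2def]
        exact Finset.min'_le _ _ (Finset.mem_image_of_mem C2f hp)
      nlinarith
    calc C1f p * Real.exp (-C2f p * t) ≤ C1 * Real.exp (-C2f p * t) :=
          mul_le_mul_of_nonneg_right h2 (Real.exp_pos _).le
      _ ≤ C1 * Real.exp (-C2 * t) :=
          mul_le_mul_of_nonneg_left h3 hC1pos.le
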